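/- arXiv:1301.1097 — 5 statements merged into one kernel-verified Lean document; each statement's English description precedes it below -/
import Mathlib

section
/- Let X be a binomial random variable with parameters n and p, and let a > 0. Then Pr(X < np - a) < exp(-a²/(2np)). -/
open scoped Classical
open Filter

/-- Number of edges of a finite simple graph. -/
noncomputable def edgeCount {V : Type*} [Fintype V] (G : SimpleGraph V) : ℕ :=
  G.edgeFinset.card

/-- `G` contains `k` pairwise edge-disjoint spanning trees. -/
def HasDisjSpanningTrees {V : Type*} (G : SimpleGraph V) (k : ℕ) : Prop :=
  ∃ f : Fin k → SimpleGraph V, (∀ i, f i ≤ G) ∧ (∀ i, (f i).IsTree) ∧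
    ∀ i j, i ≠ j → Disjoint (f i).edgeSet (f j).edgeSet

/-- Spanning tree packing number: the maximum number of pairwise
edge-disjoint spanning trees of `G`. -/
noncomputable def stp {V : Type*} (G : SimpleGraph V) : ℕ :=
  sSup {k | HasDisjSpanningTrees G k}

/-- Number of edges of `G` between `S` and its complement. -/
noncomputable def crossCount {V : Type*} [Fintype V] (G : SimpleGraph V) (S : Finset V) : ℕ :=
  ((S ×ˢ Sᶜ).filter fun e => G.Adj e.1 e.2).card

/-- Number of crossing edges of a partition `P` of the vertex set:
edges whose two endpoints lie in different parts of `P`. -/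
noncomputable def partCross {V : Type*} [Fintype V] (G : SimpleGraph V)
    (P : Finpartition (Finset.univ : Finset V)) : ℕ :=
  (G.edgeFinset.filter fun e => ∀ t ∈ P.parts, ¬ ∀ v ∈ e, v ∈ t).card

/-- Probability that the Erdős–Rényi random graph `G(n,p)` satisfies `Q`. -/
noncomputable def grProb (n : ℕ) (p : ℝ) (Q : SimpleGraph (Fin n) → Prop) : ℝ :=
  ∑ G : SimpleGraph (Fin n),
    if Q G then p ^ edgeCount G * (1 - p) ^ (n.choose 2 - edgeCount G) else 0

lemma exp_neg_le_quad {t : ℝ} (ht : 0 ≤ t) : Real.exp (-t) ≤ 1 - t + t ^ 2 / 2 := by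
  have h3 : 1 + t + t ^ 2 / 2 ≤ Real.exp t := by
    have h := Real.sum_le_exp_of_nonneg ht 3
    simp [Finset.sum_range_succ] at h
    nlinarith [h]
  have hq : 0 < 1 - t + t ^ 2 / 2 := by nlinarith [sq_nonneg (t - 1)]
  have hmul : Real.exp (-t) * Real.exp t = 1 := by
    rw [← Real.exp_add]; simp
  nlinarith [Real.exp_pos t, Real.exp_pos (-t), mul_le_mul_of_nonneg_left h3 hq.le, sq_nonneg (t ^ 2)]

theorem chernoff_lower_tail (n : ℕ) (p a : ℝ)
    (hp0 : 0 ≤ p) (hp1 : p ≤ 1) (hnp : 0 < (n : ℝ) * p) (ha : 0 < a) :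
    (∑ i ∈ Finset.range (n + 1),
        if (i : ℝ) < (n : ℝ) * p - a then
          (n.choose i : ℝ) * p ^ i * (1 - p) ^ (n - i) else 0)
      < Real.exp (-a ^ 2 / (2 * n * p)) := by
  have hn0 : 0 < (n : ℝ) := by nlinarith [Nat.cast_nonneg (α := ℝ) n]
  have hp : 0 < p := by nlinarith
  set t : ℝ := a / ((n : ℝ) * p) with ht_def
  have htpos : 0 < t := div_pos ha hnp
  have h1p : (0:ℝ) ≤ 1 - p := by linarith
  have key : (∑ i ∈ Finset.range (n + 1),
        if (i : ℝ) < (n : ℝ) * p - a then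
          (n.choose i : ℝ) * p ^ i * (1 - p) ^ (n - i) else 0)
      < ∑ i ∈ Finset.range (n + 1),
          (n.choose i : ℝ) * (p * Real.exp (-t)) ^ i * (1 - p) ^ (n - i)
            * Real.exp (t * ((n : ℝ) * p - a)) := by
    apply Finset.sum_lt_sum
    · intro i hi
      split_ifs with h
      · have hw : (0:ℝ) ≤ (n.choose i : ℝ) * p ^ i * (1 - p) ^ (n - i) := by positivity
        have hX : (1:ℝ) ≤ Real.exp (-t) ^ i * Real.exp (t * ((n : ℝ) * p - a)) := by
          rw [← Real.exp_nat_mul, ← Real.exp_add]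
          apply Real.one_le_exp
          nlinarith [mul_pos htpos (sub_pos.2 h)]
        calc (n.choose i : ℝ) * p ^ i * (1 - p) ^ (n - i)
            ≤ (n.choose i : ℝ) * p ^ i * (1 - p) ^ (n - i)
                * (Real.exp (-t) ^ i * Real.exp (t * ((n : ℝ) * p - a))) :=
              le_mul_of_one_le_right hw hX
          _ = (n.choose i : ℝ) * (p * Real.exp (-t)) ^ i * (1 - p) ^ (n - i)
                * Real.exp (t * ((n : ℝ) * p - a)) := by rw [mul_pow]; ring
      · positivity
    · refine ⟨n, Finset.self_mem_range_succ n, ?_⟩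
      have hfalse : ¬ ((n : ℝ) < (n : ℝ) * p - a) := by nlinarith
      rw [if_neg hfalse]
      simp only [Nat.choose_self, Nat.sub_self, pow_zero, Nat.cast_one, one_mul, mul_one]
      exact mul_pos (pow_pos (mul_pos hp (Real.exp_pos _)) n) (Real.exp_pos _)
  have hb : ∑ i ∈ Finset.range (n + 1),
        (n.choose i : ℝ) * (p * Real.exp (-t)) ^ i * (1 - p) ^ (n - i)
          * Real.exp (t * ((n : ℝ) * p - a))
      = (p * Real.exp (-t) + (1 - p)) ^ n * Real.exp (t * ((n : ℝ) * p - a)) := by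
    rw [add_pow, Finset.sum_mul]
    exact Finset.sum_congr rfl fun i _ => by ring
  have hbase : p * Real.exp (-t) + (1 - p) ≤ Real.exp (p * (t ^ 2 / 2 - t)) := by
    have h1 : Real.exp (-t) ≤ 1 - t + t ^ 2 / 2 := exp_neg_le_quad htpos.le
    calc p * Real.exp (-t) + (1 - p) ≤ p * (1 - t + t ^ 2 / 2) + (1 - p) := by nlinarith
      _ = p * (t ^ 2 / 2 - t) + 1 := by ring
      _ ≤ Real.exp (p * (t ^ 2 / 2 - t)) := Real.add_one_le_exp _
  have hbase0 : (0:ℝ) ≤ p * Real.exp (-t) + (1 - p) :=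
    add_nonneg (mul_nonneg hp0 (Real.exp_pos _).le) h1p
  have hpow : (p * Real.exp (-t) + (1 - p)) ^ n ≤ Real.exp ((n : ℝ) * (p * (t ^ 2 / 2 - t))) := by
    calc (p * Real.exp (-t) + (1 - p)) ^ n ≤ Real.exp (p * (t ^ 2 / 2 - t)) ^ n :=
          pow_le_pow_left₀ hbase0 hbase n
      _ = Real.exp ((n : ℝ) * (p * (t ^ 2 / 2 - t))) := by
          rw [← Real.exp_nat_mul]
  have hfin : Real.exp ((n : ℝ) * (p * (t ^ 2 / 2 - t))) * Real.exp (t * ((n : ℝ) * p - a))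
      = Real.exp (-a ^ 2 / (2 * n * p)) := by
    rw [← Real.exp_add]
    congr 1
    rw [ht_def]
    field_simp
    ring
  calc (∑ i ∈ Finset.range (n + 1),
        if (i : ℝ) < (n : ℝ) * p - a then
          (n.choose i : ℝ) * p ^ i * (1 - p) ^ (n - i) else 0)
      < (p * Real.exp (-t) + (1 - p)) ^ n * Real.exp (t * ((n : ℝ) * p - a)) := hb ▸ key
    _ ≤ Real.exp ((n : ℝ) * (p * (t ^ 2 / 2 - t))) * Real.exp (t * ((n : ℝ) * p - a)) :=
        mul_le_mul_of_nonneg_right hpow (Real.exp_pos _).le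
    _ = Real.exp (-a ^ 2 / (2 * n * p)) := hfin
end

section
/- If p(n) = (1.1 log n)/(n - ⌊log n/30⌋), then Pr(Bin(n-1, p) = ⌊log n/30⌋) = ω(1/n), i.e., n · Pr(Bin(n-1,p) = ⌊log n/30⌋) → ∞ as n → ∞. -/
open scoped Classical
open Filter

set_option maxHeartbeats 1000000 in
theorem binom_point_prob_omega :
    Filter.Tendsto
      (fun n : ℕ =>
        (n : ℝ) * ((n - 1).choose ⌊Real.log n / 30⌋₊ : ℝ) *
          (1.1 * Real.log n / ((n : ℝ) - (⌊Real.log n / 30⌋₊ : ℝ))) ^ ⌊Real.log n / 30⌋₊ *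
          (1 - 1.1 * Real.log n / ((n : ℝ) - (⌊Real.log n / 30⌋₊ : ℝ))) ^ (n - 1 - ⌊Real.log n / 30⌋₊))
      Filter.atTop Filter.atTop := by
  have hlog : Tendsto (fun n : ℕ => Real.log n) atTop atTop :=
    Real.tendsto_log_atTop.comp tendsto_natCast_atTop_atTop
  have hlog33 : (3.465:ℝ) ≤ Real.log 33 := by
    have h2 := Real.log_two_gt_d9
    have h : Real.log 32 ≤ Real.log 33 := Real.log_le_log (by norm_num) (by norm_num)
    have h32 : Real.log 32 = 5 * Real.log 2 := by
      rw [show (32:ℝ) = 2^(5:ℕ) by norm_num, Real.log_pow]; push_cast; ring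
    nlinarith
  have hlog33' : (0:ℝ) ≤ Real.log 33 := by linarith
  have hsmall : ∀ᶠ n : ℕ in atTop, Real.log n ≤ (n:ℝ)/10^7 := by
    have hb := Real.isLittleO_log_id_atTop.def (c := ((10:ℝ)^7)⁻¹) (by norm_num)
    have := tendsto_natCast_atTop_atTop (R := ℝ) |>.eventually hb
    filter_upwards [this, eventually_ge_atTop 1] with n h hn1
    have hn1' : (1:ℝ) ≤ n := by exact_mod_cast hn1
    have h0 : (0:ℝ) ≤ Real.log n := Real.log_nonneg hn1'
    simp only [Real.norm_eq_abs, id] at h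
    rw [abs_of_nonneg h0, abs_of_nonneg (by linarith : (0:ℝ) ≤ (n:ℝ))] at h
    calc Real.log n ≤ ((10:ℝ)^7)⁻¹ * n := h
      _ = (n:ℝ)/10^7 := by ring
  have key : ∀ᶠ n : ℕ in atTop,
      (1/33:ℝ) * Real.exp (0.01 * Real.log n) ≤
        (n : ℝ) * ((n - 1).choose ⌊Real.log n / 30⌋₊ : ℝ) *
          (1.1 * Real.log n / ((n : ℝ) - (⌊Real.log n / 30⌋₊ : ℝ))) ^ ⌊Real.log n / 30⌋₊ *
          (1 - 1.1 * Real.log n / ((n : ℝ) - (⌊Real.log n / 30⌋₊ : ℝ))) ^ (n - 1 - ⌊Real.log n / 30⌋₊) := by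
    filter_upwards [hlog.eventually_ge_atTop 30, hsmall] with n h30 hsm
    set L := Real.log n with hLdef
    set k := ⌊L / 30⌋₊ with hkdef
    have hL0 : (0:ℝ) < L := by linarith
    have hnR : (3*10^8 : ℝ) ≤ n := by nlinarith
    have hn0 : (0:ℝ) < n := by linarith
    have hkL : (k:ℝ) ≤ L/30 := Nat.floor_le (by positivity)
    have hkL' : L/30 < (k:ℝ) + 1 := Nat.lt_floor_add_one _
    have hk1 : 1 ≤ k := Nat.le_floor (by push_cast; linarith)
    have hk0 : (0:ℝ) < k := by exact_mod_cast hk1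
    have hkn : (k:ℝ) ≤ (n:ℝ)/10^5 := by nlinarith
    have hknlt : (k:ℝ) < n := by nlinarith
    have hknN : k < n := by exact_mod_cast hknlt
    have hnk0 : (0:ℝ) < (n:ℝ) - k := by linarith
    set p := 1.1 * L / ((n:ℝ) - k) with hpdef
    have hp0 : 0 < p := by positivity
    have hple : p * ((n:ℝ) - k) = 1.1 * L := div_mul_cancel₀ _ hnk0.ne'
    have hp : p ≤ 1/10^5 := by nlinarith
    have hq0 : (0:ℝ) < 1 - p := by linarith
    -- Step A : 33^k ≤ choose * p^k
    have hA : (33:ℝ)^k ≤ ((n-1).choose k : ℝ) * p^k := by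
      have hcast : ((n - k : ℕ):ℝ) = (n:ℝ) - k := by
        push_cast [Nat.cast_sub hknN.le]; ring
      have hub : ((n:ℝ) - k)^k / (Nat.factorial k) ≤ ((n-1).choose k : ℝ) := by
        have h := Nat.pow_le_choose (α := ℝ) k (n-1)
        rwa [show n - 1 + 1 - k = n - k by omega, hcast] at h
      have hfact : ((Nat.factorial k : ℕ):ℝ) ≤ (k:ℝ)^k := by
        exact_mod_cast Nat.factorial_le_pow k
      have hfact0 : (0:ℝ) < (Nat.factorial k : ℝ) := by
        exact_mod_cast Nat.factorial_pos k
      have h33k : (33:ℝ) * k ≤ 1.1 * L := by nlinarith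
      calc (33:ℝ)^k ≤ (1.1 * L / k)^k := by
            apply pow_le_pow_left₀ (by norm_num)
            rw [le_div_iff₀ hk0]; linarith
        _ = (1.1 * L)^k / (k:ℝ)^k := div_pow _ _ _
        _ ≤ (1.1 * L)^k / (Nat.factorial k : ℝ) := by
            apply div_le_div_of_nonneg_left (by positivity) hfact0 hfact
        _ = (((n:ℝ) - k)^k / (Nat.factorial k : ℝ)) * p^k := by
            rw [← hple, mul_pow]; ring
        _ ≤ ((n-1).choose k : ℝ) * p^k := by
            apply mul_le_mul_of_nonneg_right hub (by positivity)
    -- Step B : exp(-1.101 L) ≤ (1-p)^(n-1-k)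
    have hqexp : Real.exp (-(p/(1-p))) ≤ 1 - p := by
      have h1 : p/(1-p) + 1 ≤ Real.exp (p/(1-p)) := Real.add_one_le_exp _
      have h2 : 1/(1-p) ≤ Real.exp (p/(1-p)) := by
        have he : p/(1-p) + 1 = 1/(1-p) := by field_simp; ring
        linarith
      rw [Real.exp_neg, inv_le_comm₀ (Real.exp_pos _) hq0, ← one_div]
      exact h2
    have hB : Real.exp (-(1.101 * L)) ≤ (1-p)^(n-1-k) := by
      have hm : ((n-1-k : ℕ):ℝ) ≤ (n:ℝ) := by
        exact_mod_cast Nat.cast_le.mpr (by omega : n - 1 - k ≤ n)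
      have hmnn : (0:ℝ) ≤ ((n-1-k:ℕ):ℝ) := Nat.cast_nonneg _
      have hpq : (0:ℝ) ≤ p/(1-p) := by positivity
      have hnp : (n:ℝ) * (p/(1-p)) ≤ 1.101 * L := by
        rw [← mul_div_assoc, div_le_iff₀ hq0]
        nlinarith [mul_nonneg (by linarith : (0:ℝ) ≤ L/30 - k) hp0.le,
          mul_nonneg (by linarith : (0:ℝ) ≤ 1/10^5 - p) hL0.le,
          mul_nonneg (by linarith : (0:ℝ) ≤ 1/10^5 - p) hk0.le, hple]
      calc Real.exp (-(1.101 * L)) ≤ Real.exp (-(((n-1-k:ℕ):ℝ) * (p/(1-p)))) := by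
            apply Real.exp_le_exp.2
            have : ((n-1-k:ℕ):ℝ) * (p/(1-p)) ≤ (n:ℝ) * (p/(1-p)) :=
              mul_le_mul_of_nonneg_right hm hpq
            linarith
        _ = Real.exp (-(p/(1-p))) ^ (n-1-k) := by
            rw [← Real.exp_nat_mul]; ring_nf
        _ ≤ (1-p)^(n-1-k) := pow_le_pow_left₀ (Real.exp_pos _).le hqexp _
    -- Step C : n = exp L, 33^k ≥ exp((L/30 - 1) log 33)
    have hnexp : (n:ℝ) = Real.exp L := (Real.exp_log hn0).symm
    have h33exp : Real.exp ((L/30 - 1) * Real.log 33) ≤ (33:ℝ)^k := by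
      rw [show (33:ℝ)^k = Real.exp ((k:ℝ) * Real.log 33) by
        rw [Real.exp_nat_mul, Real.exp_log (by norm_num)]]
      apply Real.exp_le_exp.2
      apply mul_le_mul_of_nonneg_right _ hlog33'
      linarith
    -- Assemble
    have hCnn : (0:ℝ) ≤ ((n-1).choose k : ℝ) := Nat.cast_nonneg _
    have hfin : (1/33:ℝ) * Real.exp (0.01 * L) ≤
        Real.exp L * Real.exp ((L/30 - 1) * Real.log 33) * Real.exp (-(1.101 * L)) := by
      rw [← Real.exp_add, ← Real.exp_add,
        show (1/33:ℝ) = Real.exp (-Real.log 33) by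
          rw [Real.exp_neg, Real.exp_log] <;> norm_num]
      rw [← Real.exp_add]
      apply Real.exp_le_exp.2
      nlinarith [mul_nonneg hL0.le (by linarith : (0:ℝ) ≤ Real.log 33 - 3.465)]
    calc (1/33:ℝ) * Real.exp (0.01 * L) ≤
          Real.exp L * Real.exp ((L/30 - 1) * Real.log 33) * Real.exp (-(1.101 * L)) := hfin
      _ ≤ ((n:ℝ) * (33:ℝ)^k) * Real.exp (-(1.101 * L)) := by
          apply mul_le_mul_of_nonneg_right _ (Real.exp_pos _).le
          rw [hnexp]
          exact mul_le_mul_of_nonneg_left h33exp (Real.exp_pos _).le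
      _ ≤ ((n:ℝ) * (((n-1).choose k : ℝ) * p^k)) * ((1-p)^(n-1-k)) := by
          apply mul_le_mul
          · exact mul_le_mul_of_nonneg_left hA hn0.le
          · exact hB
          · exact (Real.exp_pos _).le
          · positivity
      _ = (n : ℝ) * ((n-1).choose k : ℝ) * p ^ k * (1-p)^(n-1-k) := by ring
  refine tendsto_atTop_mono' _ key ?_
  have h1 : Tendsto (fun n : ℕ => 0.01 * Real.log n) atTop atTop :=
    hlog.const_mul_atTop (by norm_num)
  have h2 : Tendsto (fun n : ℕ => Real.exp (0.01 * Real.log n)) atTop atTop :=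
    Real.tendsto_exp_atTop.comp h1
  exact h2.const_mul_atTop (by norm_num)
end

section
/- If (log n + ω(1))/n ≤ p ≤ (1.1 log n)/n, then asymptotically almost surely the random graph G(n,p) has minimum degree at most log n / 30. -/
open scoped Classical
open Filter

section Generic
variable {ι : Type*} [Fintype ι] [DecidableEq ι]

/-- binomial-type sum -/
noncomputable def bin (p : ℝ) (m : ℕ) (φ : ℕ → ℝ) : ℝ :=
  ∑ j ∈ Finset.range (m+1), (m.choose j : ℝ) * p^j * (1-p)^(m-j) * φ j

lemma bin_one (p : ℝ) (m : ℕ) : bin p m (fun _ => 1) = 1 := by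
  have h : bin p m (fun _ => 1) = (p + (1-p))^m := by
    rw [add_pow]
    exact Finset.sum_congr rfl fun j _ => by ring
  rw [h, show p + (1-p) = 1 by ring, one_pow]

/-- support of a boolean vector -/
def supp (f : ι → Bool) : Finset ι := Finset.univ.filter (fun s => f s = true)

/-- count of true coordinates within `T` -/
def cnt (T : Finset ι) (f : ι → Bool) : ℕ := (T.filter (fun s => f s = true)).card

lemma cnt_eq_card_inter (T : Finset ι) (f : ι → Bool) : cnt T f = (supp f ∩ T).card := by
  unfold cnt
  congr 1
  ext s
  simp [supp, and_comm]

lemma cnt_mono {T T' : Finset ι} (h : T ⊆ T') (f : ι → Bool) : cnt T f ≤ cnt T' f :=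
  Finset.card_le_card (Finset.filter_subset_filter _ h)

lemma wt_eq (p : ℝ) (f : ι → Bool) :
    (∏ s, if f s then p else 1-p)
      = p ^ (supp f).card * (1-p) ^ (Fintype.card ι - (supp f).card) := by
  rw [← Finset.prod_filter_mul_prod_filter_not (Finset.univ : Finset ι)
    (fun s => f s = true) (fun s => if f s then p else 1-p)]
  have h1 : ∀ x ∈ Finset.univ.filter (fun s => f s = true),
      (if f x then p else 1-p) = p := by
    intro x hx
    simp only [Finset.mem_filter] at hx
    simp [hx.2]
  have h2 : ∀ x ∈ Finset.univ.filter (fun s => ¬ f s = true),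
      (if f x then p else 1-p) = 1 - p := by
    intro x hx
    simp only [Finset.mem_filter] at hx
    simp [hx.2]
  rw [Finset.prod_congr rfl h1, Finset.prod_congr rfl h2, Finset.prod_const,
    Finset.prod_const]
  have hc : (Finset.univ.filter (fun s => ¬ f s = true)).card
      = Fintype.card ι - (supp f).card := by
    have := Finset.card_filter_add_card_filter_not
      (s := (Finset.univ : Finset ι)) (p := fun s => f s = true)
    simp only [Finset.card_univ] at this
    unfold supp
    omega
  rw [hc]
  rfl

lemma sum_bool_eq_powerset (F : Finset ι → ℝ) :
    ∑ f : ι → Bool, F (supp f) = ∑ A ∈ (Finset.univ : Finset ι).powerset, F A := by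
  refine Finset.sum_nbij' (i := fun f => supp f) (j := fun A => fun s => decide (s ∈ A))
    ?_ ?_ ?_ ?_ ?_
  · intro f _; exact Finset.mem_powerset.2 (Finset.filter_subset _ _)
  · intro A _; exact Finset.mem_univ _
  · intro f _; funext s; simp [supp]
  · intro A _; ext s; simp [supp]
  · intro f _; rfl

lemma sum_powerset_mul {s t : Finset ι} (hst : Disjoint s t) (F G : Finset ι → ℝ) :
    ∑ A ∈ (s ∪ t).powerset, F (A ∩ s) * G (A ∩ t)
      = (∑ B ∈ s.powerset, F B) * (∑ C ∈ t.powerset, G C) := by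
  rw [Finset.sum_mul_sum]
  rw [← Finset.sum_product']
  refine Finset.sum_nbij' (i := fun A => (A ∩ s, A ∩ t)) (j := fun P => P.1 ∪ P.2)
    ?_ ?_ ?_ ?_ ?_
  · intro A hA
    simp only [Finset.mem_product, Finset.mem_powerset]
    exact ⟨Finset.inter_subset_right, Finset.inter_subset_right⟩
  · intro P hP
    simp only [Finset.mem_product, Finset.mem_powerset] at hP
    exact Finset.mem_powerset.2 (Finset.union_subset_union hP.1 hP.2)
  · intro A hA
    rw [Finset.mem_powerset] at hA
    simp only
    rw [← Finset.inter_union_distrib_left, Finset.inter_eq_left.2 hA]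
  · intro P hP
    simp only [Finset.mem_product, Finset.mem_powerset] at hP
    have e1 : P.2 ∩ s = ∅ := Finset.eq_empty_of_forall_notMem fun x hx => by
      rcases Finset.mem_inter.1 hx with ⟨h2, h1⟩
      exact (Finset.disjoint_right.1 hst (hP.2 h2)) h1
    have e2 : P.1 ∩ t = ∅ := Finset.eq_empty_of_forall_notMem fun x hx => by
      rcases Finset.mem_inter.1 hx with ⟨h1, h2⟩
      exact (Finset.disjoint_left.1 hst (hP.1 h1)) h2
    have h1 : (P.1 ∪ P.2) ∩ s = P.1 := by
      rw [Finset.union_inter_distrib_right, Finset.inter_eq_left.2 hP.1, e1, Finset.union_empty]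
    have h2 : (P.1 ∪ P.2) ∩ t = P.2 := by
      rw [Finset.union_inter_distrib_right, Finset.inter_eq_left.2 hP.2, e2, Finset.empty_union]
    rw [h1, h2]
  · intro A _; rfl

lemma sum_powerset_card (p : ℝ) (T : Finset ι) (φ : ℕ → ℝ) :
    ∑ B ∈ T.powerset, p^B.card * (1-p)^(T.card - B.card) * φ B.card = bin p T.card φ := by
  rw [Finset.sum_powerset_apply_card (f := fun m => p^m * (1-p)^(T.card-m) * φ m)]
  unfold bin
  exact Finset.sum_congr rfl fun j _ => by rw [nsmul_eq_mul]; ring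

/-- Master factorization: expectation of a product of functions of counts on two
disjoint coordinate sets. -/
lemma EE_two (p : ℝ) (T₁ T₂ : Finset ι) (hd : Disjoint T₁ T₂) (φ ψ : ℕ → ℝ) :
    ∑ f : ι → Bool, (∏ s, if f s then p else 1-p) * (φ (cnt T₁ f) * ψ (cnt T₂ f))
      = bin p T₁.card φ * bin p T₂.card ψ := by
  classical
  set R : Finset ι := (T₁ ∪ T₂)ᶜ with hR
  have hdR1 : Disjoint (T₁ ∪ T₂) R := disjoint_compl_right
  have huniv : (T₁ ∪ T₂) ∪ R = Finset.univ := by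
    rw [hR, Finset.union_compl]
  -- rewrite summand as F (supp f)
  have step1 : ∀ f : ι → Bool,
      (∏ s, if f s then p else 1-p) * (φ (cnt T₁ f) * ψ (cnt T₂ f))
      = p ^ (supp f).card * (1-p) ^ (Fintype.card ι - (supp f).card)
          * (φ ((supp f ∩ T₁).card) * ψ ((supp f ∩ T₂).card)) := by
    intro f
    rw [wt_eq, cnt_eq_card_inter, cnt_eq_card_inter]
  simp only [step1]
  rw [sum_bool_eq_powerset (F := fun A => p ^ A.card * (1-p) ^ (Fintype.card ι - A.card)
      * (φ ((A ∩ T₁).card) * ψ ((A ∩ T₂).card)))]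
  have hcard : T₁.card + T₂.card + R.card = Fintype.card ι := by
    rw [← Finset.card_union_of_disjoint hd, ← Finset.card_union_of_disjoint hdR1, huniv,
      Finset.card_univ]
  -- the three per-block factors
  set F₁ : Finset ι → ℝ := fun B => p ^ B.card * (1-p) ^ (T₁.card - B.card) * φ B.card with hF₁
  set F₂ : Finset ι → ℝ := fun B => p ^ B.card * (1-p) ^ (T₂.card - B.card) * ψ B.card with hF₂
  set F₃ : Finset ι → ℝ := fun B => p ^ B.card * (1-p) ^ (R.card - B.card) with hF₃
  have step2 : ∀ A ∈ (Finset.univ : Finset ι).powerset,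
      p ^ A.card * (1-p) ^ (Fintype.card ι - A.card)
          * (φ ((A ∩ T₁).card) * ψ ((A ∩ T₂).card))
      = (fun B => F₁ (B ∩ T₁) * F₂ (B ∩ T₂)) (A ∩ (T₁ ∪ T₂)) * F₃ (A ∩ R) := by
    intro A _
    have e1 : A ∩ (T₁ ∪ T₂) ∩ T₁ = A ∩ T₁ := by
      rw [Finset.inter_assoc, Finset.union_inter_cancel_left]
    have e2 : A ∩ (T₁ ∪ T₂) ∩ T₂ = A ∩ T₂ := by
      rw [Finset.inter_assoc, Finset.union_inter_cancel_right]
    simp only [e1, e2, hF₁, hF₂, hF₃]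
    have hd12 : Disjoint (A ∩ T₁) (A ∩ T₂) := hd.mono Finset.inter_subset_right
      Finset.inter_subset_right
    have hd3 : Disjoint (A ∩ T₁ ∪ A ∩ T₂) (A ∩ R) := by
      refine (hdR1.mono ?_ Finset.inter_subset_right)
      rw [← Finset.inter_union_distrib_left]
      exact Finset.inter_subset_right
    have hsum : (A ∩ T₁).card + (A ∩ T₂).card + (A ∩ R).card = A.card := by
      rw [← Finset.card_union_of_disjoint hd12, ← Finset.card_union_of_disjoint hd3,
        ← Finset.inter_union_distrib_left, ← Finset.inter_union_distrib_left, huniv,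
        Finset.inter_univ]
    have l1 : (A ∩ T₁).card ≤ T₁.card := Finset.card_le_card Finset.inter_subset_right
    have l2 : (A ∩ T₂).card ≤ T₂.card := Finset.card_le_card Finset.inter_subset_right
    have l3 : (A ∩ R).card ≤ R.card := Finset.card_le_card Finset.inter_subset_right
    have epow : p ^ A.card = p ^ (A ∩ T₁).card * p ^ (A ∩ T₂).card * p ^ (A ∩ R).card := by
      rw [← pow_add, ← pow_add, hsum]
    have epow2 : (1-p) ^ (Fintype.card ι - A.card)
        = (1-p) ^ (T₁.card - (A ∩ T₁).card) * (1-p) ^ (T₂.card - (A ∩ T₂).card)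
          * (1-p) ^ (R.card - (A ∩ R).card) := by
      rw [← pow_add, ← pow_add]
      congr 1
      omega
    rw [epow, epow2]
    ring
  rw [Finset.sum_congr rfl step2, ← huniv,
    sum_powerset_mul hdR1 (fun B => F₁ (B ∩ T₁) * F₂ (B ∩ T₂)) F₃,
    sum_powerset_mul hd F₁ F₂]
  have h3 : ∑ C ∈ R.powerset, F₃ C = 1 := by
    have := sum_powerset_card p R (fun _ => 1)
    simp only [mul_one] at this
    rw [hF₃]
    simp only
    rw [this, bin_one]
  rw [h3, sum_powerset_card, sum_powerset_card, mul_one]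

/-- Single-set version. -/
lemma EE_one (p : ℝ) (T : Finset ι) (φ : ℕ → ℝ) :
    ∑ f : ι → Bool, (∏ s, if f s then p else 1-p) * φ (cnt T f) = bin p T.card φ := by
  have h := EE_two p T ∅ (Finset.disjoint_empty_right _) φ (fun _ => 1)
  simp only [mul_one, Finset.card_empty] at h
  rw [h, bin_one, mul_one]

/-- Normalization. -/
lemma EE_norm (p : ℝ) :
    ∑ f : ι → Bool, (∏ s, if f s then p else 1-p) = 1 := by
  have h := EE_one p (∅ : Finset ι) (fun _ => 1)
  simp only [mul_one, Finset.card_empty] at h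
  rw [h, bin_one]
end Generic

section GraphCorr
variable {n : ℕ}

abbrev Slots (n : ℕ) := {e : Sym2 (Fin n) // ¬ e.IsDiag}

noncomputable def σG (G : SimpleGraph (Fin n)) : Slots n → Bool :=
  fun s => if s.1 ∈ G.edgeSet then true else false

lemma σG_true_iff (G : SimpleGraph (Fin n)) (s : Slots n) :
    σG G s = true ↔ s.1 ∈ G.edgeSet := by
  unfold σG
  by_cases h : s.1 ∈ G.edgeSet <;> simp [h]

lemma σG_bijective : Function.Bijective (σG (n := n)) := by
  constructor
  · intro G H h
    rw [← SimpleGraph.edgeSet_inj]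
    ext e
    by_cases hd : e.IsDiag
    · constructor <;> intro hm <;>
        exact absurd hd (SimpleGraph.not_isDiag_of_mem_edgeSet _ hm)
    · have := congrFun h ⟨e, hd⟩
      rw [← σG_true_iff G ⟨e, hd⟩, ← σG_true_iff H ⟨e, hd⟩, this]
  · intro f
    refine ⟨SimpleGraph.fromEdgeSet {e | ∃ h : ¬ e.IsDiag, f ⟨e, h⟩ = true}, ?_⟩
    funext s
    have hs : s.1 ∈ (SimpleGraph.fromEdgeSet
        {e | ∃ h : ¬ e.IsDiag, f ⟨e, h⟩ = true}).edgeSet ↔ f s = true := by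
      rw [SimpleGraph.edgeSet_fromEdgeSet]
      constructor
      · rintro ⟨⟨h, hf⟩, -⟩
        convert hf
      · intro hf
        exact ⟨⟨s.2, hf⟩, s.2⟩
    cases hfs : f s
    · have := (not_iff_not.2 hs).2 (by simp [hfs])
      unfold σG
      rw [if_neg this]
    · have := hs.2 hfs
      unfold σG
      rw [if_pos this]

/-- Incident slots of a vertex. -/
noncomputable def Tv (n : ℕ) (v : Fin n) : Finset (Slots n) :=
  Finset.univ.filter (fun s : Slots n => v ∈ s.1)

lemma cnt_univ_σG (G : SimpleGraph (Fin n)) : cnt Finset.univ (σG G) = edgeCount G := by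
  unfold cnt edgeCount
  refine Finset.card_bij (fun s _ => s.1) ?_ ?_ ?_
  · intro s hs
    rw [Finset.mem_filter] at hs
    rw [SimpleGraph.mem_edgeFinset]
    exact (σG_true_iff G s).1 hs.2
  · intro a ha b hb hab
    exact Subtype.ext hab
  · intro e he
    rw [SimpleGraph.mem_edgeFinset] at he
    refine ⟨⟨e, SimpleGraph.not_isDiag_of_mem_edgeSet _ he⟩, ?_, rfl⟩
    rw [Finset.mem_filter]
    exact ⟨Finset.mem_univ _, (σG_true_iff G _).2 he⟩

lemma cnt_Tv_σG (G : SimpleGraph (Fin n)) (v : Fin n) :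
    cnt (Tv n v) (σG G) = G.degree v := by
  classical
  rw [← SimpleGraph.card_incidenceFinset_eq_degree]
  unfold cnt Tv
  refine Finset.card_bij (fun s _ => s.1) ?_ ?_ ?_
  · intro s hs
    simp only [Finset.filter_filter, Finset.mem_filter] at hs
    rw [SimpleGraph.mem_incidenceFinset]
    exact ⟨(σG_true_iff G s).1 hs.2.2, hs.2.1⟩
  · intro a ha b hb hab
    exact Subtype.ext hab
  · intro e he
    rw [SimpleGraph.mem_incidenceFinset] at he
    refine ⟨⟨e, SimpleGraph.not_isDiag_of_mem_edgeSet _ he.1⟩, ?_, rfl⟩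
    simp only [Finset.filter_filter, Finset.mem_filter]
    exact ⟨Finset.mem_univ _, he.2, (σG_true_iff G _).2 he.1⟩

lemma card_Tv (v : Fin n) : (Tv n v).card = n - 1 := by
  classical
  have h := cnt_Tv_σG (⊤ : SimpleGraph (Fin n)) v
  have hcnt : cnt (Tv n v) (σG ⊤) = (Tv n v).card := by
    unfold cnt
    congr 1
    rw [Finset.filter_eq_self]
    intro s _
    rw [σG_true_iff, SimpleGraph.edgeSet_top]
    exact s.2
  rw [hcnt] at h
  rw [h]
  have h2 := SimpleGraph.complete_graph_degree (V := Fin n) v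
  rw [Fintype.card_fin] at h2
  convert h2 using 2 <;> exact Subsingleton.elim _ _

lemma card_slots : Fintype.card (Slots n) = n.choose 2 := by
  have := Sym2.card_subtype_not_diag (α := Fin n)
  simpa using this


/-- the slot for the pair u,v -/
def suv {n : ℕ} {u v : Fin n} (hne : u ≠ v) : Slots n :=
  ⟨s(u,v), by simp [Sym2.isDiag_iff_proj_eq, hne]⟩

lemma mem_Tv {v : Fin n} {s : Slots n} : s ∈ Tv n v ↔ v ∈ s.1 := by
  unfold Tv
  simp

lemma inter_Tv_subset {u v : Fin n} (hne : u ≠ v) :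
    Tv n u ∩ Tv n v ⊆ {suv hne} := by
  intro s hs
  rw [Finset.mem_inter, mem_Tv, mem_Tv] at hs
  rw [Finset.mem_singleton]
  exact Subtype.ext ((Sym2.mem_and_mem_iff hne).1 ⟨hs.1, hs.2⟩)

lemma disjoint_Tv_sdiff {u v : Fin n} (hne : u ≠ v) :
    Disjoint (Tv n u \ {suv hne}) (Tv n v \ {suv hne}) := by
  rw [Finset.disjoint_left]
  intro s hsu hsv
  rw [Finset.mem_sdiff] at hsu hsv
  exact hsu.2 (inter_Tv_subset hne (Finset.mem_inter.2 ⟨hsu.1, hsv.1⟩))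

lemma card_Tv_sdiff {u v : Fin n} (hne : u ≠ v) :
    (Tv n u \ {suv hne}).card = n - 2 := by
  have hmem : suv hne ∈ Tv n u := by
    rw [mem_Tv]
    exact Sym2.mem_mk_left u v
  have : ({suv hne} : Finset (Slots n)) ⊆ Tv n u := Finset.singleton_subset_iff.2 hmem
  rw [Finset.card_sdiff_of_subset this, card_Tv, Finset.card_singleton]
  have : Nontrivial (Fin n) := ⟨⟨u, v, hne⟩⟩
  have hn : 2 ≤ n := by have h := Fintype.one_lt_card (α := Fin n); simp at h; omega
  omega

lemma card_Tv_sdiff' {u v : Fin n} (hne : u ≠ v) :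
    (Tv n v \ {suv hne}).card = n - 2 := by
  have hs : suv hne = suv hne.symm := Subtype.ext (Sym2.eq_swap)
  rw [hs]
  exact card_Tv_sdiff hne.symm

end GraphCorr

section Transfer
variable {n : ℕ}

/-- The probability expressed on the Boolean side. -/
lemma grProb_eq (p : ℝ) (Q : SimpleGraph (Fin n) → Prop) (P : (Slots n → Bool) → Prop)
    (hQP : ∀ G, Q G ↔ P (σG G)) :
    grProb n p Q = ∑ f : Slots n → Bool,
      (∏ s, if f s then p else 1-p) * (if P f then 1 else 0) := by
  unfold grProb
  rw [← Function.Bijective.sum_comp (σG_bijective (n := n))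
    (fun f => (∏ s, if f s then p else 1-p) * (if P f then 1 else 0))]
  apply Finset.sum_congr rfl
  intro G _
  rw [wt_eq, show (supp (σG G)).card = cnt Finset.univ (σG G) from rfl,
    cnt_univ_σG, card_slots]
  by_cases h : Q G
  · rw [if_pos h, if_pos ((hQP G).1 h), mul_one]
  · rw [if_neg h, if_neg (fun hP => h ((hQP G).2 hP)), mul_zero]

end Transfer

section Main
variable {n : ℕ}

noncomputable def φK (K : ℕ) : ℕ → ℝ := fun j => if j ≤ K then 1 else 0

lemma φK_nonneg (K j : ℕ) : 0 ≤ φK K j := by unfold φK; positivity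

lemma φK_le_one (K j : ℕ) : φK K j ≤ 1 := by
  unfold φK; split <;> norm_num

lemma φK_sq (K j : ℕ) : φK K j * φK K j = φK K j := by
  unfold φK; split <;> norm_num

lemma bin_nonneg {p : ℝ} (hp0 : 0 ≤ p) (hp1 : p ≤ 1) (m : ℕ) {φ : ℕ → ℝ}
    (hφ : ∀ j, 0 ≤ φ j) : 0 ≤ bin p m φ := by
  unfold bin
  apply Finset.sum_nonneg
  intro j _
  have h1 : (0:ℝ) ≤ 1 - p := by linarith
  exact mul_nonneg (by positivity) (hφ j)

noncomputable def qq (n : ℕ) (p : ℝ) (K : ℕ) : ℝ := bin p (n-1) (φK K)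

lemma wt_nonneg {ι : Type*} [Fintype ι] {p : ℝ} (hp0 : 0 ≤ p) (hp1 : p ≤ 1) (f : ι → Bool) :
    0 ≤ ∏ s, (if f s then p else 1-p) := by
  apply Finset.prod_nonneg
  intro s _
  split
  · exact hp0
  · linarith

lemma qq_prime_le (hn : 2 ≤ n) {p : ℝ} (hp0 : 0 ≤ p) (hp1 : p < 1) (K : ℕ) :
    bin p (n-2) (φK K) * (1-p) ≤ qq n p K := by
  have h1p : (0:ℝ) ≤ 1 - p := by linarith
  unfold qq bin
  rw [Finset.sum_mul]
  have hsub : Finset.range (n-2+1) ⊆ Finset.range (n-1+1) := by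
    apply Finset.range_subset_range.2
    omega
  calc ∑ j ∈ Finset.range (n-2+1), ((n-2).choose j : ℝ) * p^j * (1-p)^(n-2-j) * φK K j * (1-p)
      ≤ ∑ j ∈ Finset.range (n-2+1), ((n-1).choose j : ℝ) * p^j * (1-p)^(n-1-j) * φK K j := by
        apply Finset.sum_le_sum
        intro j hj
        rw [Finset.mem_range] at hj
        have hj2 : j ≤ n - 2 := by omega
        have he : (n-2-j) + 1 = n-1-j := by omega
        have : ((n-2).choose j : ℝ) * p^j * (1-p)^(n-2-j) * φK K j * (1-p)
            = ((n-2).choose j : ℝ) * p^j * (1-p)^((n-2-j)+1) * φK K j := by ring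
        rw [this, he]
        have hc : ((n-2).choose j : ℝ) ≤ ((n-1).choose j : ℝ) := by
          exact_mod_cast Nat.choose_le_choose j (by omega : n-2 ≤ n-1)
        have := φK_nonneg K j
        apply mul_le_mul_of_nonneg_right _ this
        apply mul_le_mul_of_nonneg_right _ (by positivity)
        apply mul_le_mul_of_nonneg_right hc (by positivity)
    _ ≤ ∑ j ∈ Finset.range (n-1+1), ((n-1).choose j : ℝ) * p^j * (1-p)^(n-1-j) * φK K j := by
        apply Finset.sum_le_sum_of_subset_of_nonneg hsub
        intro j _ _
        have := φK_nonneg K j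
        positivity

/-- First moment: expectation of the number of low-degree vertices. -/
lemma first_moment (p : ℝ) (K : ℕ) :
    ∑ f : Slots n → Bool, (∏ s, if f s then p else 1-p)
        * (∑ v : Fin n, φK K (cnt (Tv n v) f))
      = n * qq n p K := by
  have hs : ∀ f : Slots n → Bool, (∏ s, if f s then p else 1-p)
        * (∑ v : Fin n, φK K (cnt (Tv n v) f))
      = ∑ v : Fin n, (∏ s, if f s then p else 1-p) * φK K (cnt (Tv n v) f) := by
    intro f
    rw [Finset.mul_sum]
  simp only [hs]
  rw [Finset.sum_comm]
  have hv : ∀ v : Fin n, ∑ f : Slots n → Bool,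
      (∏ s, if f s then p else 1-p) * φK K (cnt (Tv n v) f) = qq n p K := by
    intro v
    rw [EE_one p (Tv n v) (φK K), card_Tv]
    rfl
  rw [Finset.sum_congr rfl (fun v _ => hv v), Finset.sum_const, Finset.card_univ,
    Fintype.card_fin, nsmul_eq_mul]

/-- Second moment bound. -/
lemma second_moment {p : ℝ} (hp0 : 0 ≤ p) (hp1 : p < 1) (K : ℕ) :
    ∑ f : Slots n → Bool, (∏ s, if f s then p else 1-p)
        * (∑ v : Fin n, φK K (cnt (Tv n v) f))^2
      ≤ n * qq n p K + (n * qq n p K)^2 * ((1-p)⁻¹)^2 := by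
  have hp1' : p ≤ 1 := le_of_lt hp1
  have h1p : (0:ℝ) < 1 - p := by linarith
  set q' := bin p (n-2) (φK K) with hq'
  have hq'0 : 0 ≤ q' := bin_nonneg hp0 hp1' _ (φK_nonneg K)
  have hq0 : 0 ≤ qq n p K := bin_nonneg hp0 hp1' _ (φK_nonneg K)
  -- expand square and swap sums
  have expand : ∀ f : Slots n → Bool, (∏ s, if f s then p else 1-p)
        * (∑ v : Fin n, φK K (cnt (Tv n v) f))^2
      = ∑ u : Fin n, ∑ v : Fin n, (∏ s, if f s then p else 1-p)
          * (φK K (cnt (Tv n u) f) * φK K (cnt (Tv n v) f)) := by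
    intro f
    rw [sq, Finset.sum_mul_sum]
    rw [Finset.mul_sum]
    apply Finset.sum_congr rfl
    intro u _
    rw [Finset.mul_sum]
  -- per-pair expectations
  set e : Fin n → Fin n → ℝ := fun u v => ∑ f : Slots n → Bool,
      (∏ s, if f s then p else 1-p) * (φK K (cnt (Tv n u) f) * φK K (cnt (Tv n v) f)) with he
  have hdiag : ∀ v : Fin n, e v v = qq n p K := by
    intro v
    rw [he]
    simp only [φK_sq]
    rw [EE_one p (Tv n v) (φK K), card_Tv]
    rfl
  have hoff : ∀ u v : Fin n, u ≠ v → e u v ≤ q' * q' := by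
    intro u v hne
    rw [he]
    simp only
    have hle : ∀ f : Slots n → Bool, (∏ s, if f s then p else 1-p)
        * (φK K (cnt (Tv n u) f) * φK K (cnt (Tv n v) f))
        ≤ (∏ s, if f s then p else 1-p)
        * (φK K (cnt (Tv n u \ {suv hne}) f) * φK K (cnt (Tv n v \ {suv hne}) f)) := by
      intro f
      apply mul_le_mul_of_nonneg_left _ (wt_nonneg hp0 hp1' f)
      have m1 : φK K (cnt (Tv n u) f) ≤ φK K (cnt (Tv n u \ {suv hne}) f) := by
        unfold φK
        split
        · rw [if_pos (le_trans (cnt_mono (Finset.sdiff_subset) f) (by assumption))]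
        · split <;> norm_num
      have m2 : φK K (cnt (Tv n v) f) ≤ φK K (cnt (Tv n v \ {suv hne}) f) := by
        unfold φK
        split
        · rw [if_pos (le_trans (cnt_mono (Finset.sdiff_subset) f) (by assumption))]
        · split <;> norm_num
      exact mul_le_mul m1 m2 (φK_nonneg _ _) (φK_nonneg _ _)
    calc (∑ f : Slots n → Bool, (∏ s, if f s then p else 1-p)
          * (φK K (cnt (Tv n u) f) * φK K (cnt (Tv n v) f)))
        ≤ ∑ f : Slots n → Bool, (∏ s, if f s then p else 1-p)
          * (φK K (cnt (Tv n u \ {suv hne}) f) * φK K (cnt (Tv n v \ {suv hne}) f)) :=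
          Finset.sum_le_sum (fun f _ => hle f)
      _ = bin p (Tv n u \ {suv hne}).card (φK K) * bin p (Tv n v \ {suv hne}).card (φK K) :=
          EE_two p _ _ (disjoint_Tv_sdiff hne) (φK K) (φK K)
      _ = q' * q' := by rw [card_Tv_sdiff hne, card_Tv_sdiff' hne]
  -- assemble
  have hn2 : 2 ≤ n ∨ n < 2 := by omega
  have key : ∑ u : Fin n, ∑ v : Fin n, e u v ≤ n * qq n p K + (n:ℝ)^2 * (q' * q') := by
    have hub : ∀ u : Fin n, ∑ v : Fin n, e u v ≤ qq n p K + n * (q' * q') := by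
      intro u
      rw [← Finset.add_sum_erase Finset.univ _ (Finset.mem_univ u), hdiag u]
      refine add_le_add le_rfl ?_
      calc ∑ v ∈ Finset.univ.erase u, e u v
          ≤ ∑ v ∈ Finset.univ.erase u, q' * q' := by
            apply Finset.sum_le_sum
            intro v hv
            exact hoff u v (Ne.symm (Finset.ne_of_mem_erase hv))
        _ = ((Finset.univ.erase u).card : ℝ) * (q' * q') := by
            rw [Finset.sum_const, nsmul_eq_mul]
        _ ≤ n * (q' * q') := by
            apply mul_le_mul_of_nonneg_right _ (by positivity)
            have : (Finset.univ.erase u).card ≤ n := by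
              calc (Finset.univ.erase u).card ≤ Finset.univ.card := Finset.card_le_card
                    (Finset.erase_subset _ _)
                _ = n := by rw [Finset.card_univ, Fintype.card_fin]
            exact_mod_cast this
    calc ∑ u : Fin n, ∑ v : Fin n, e u v ≤ ∑ u : Fin n, (qq n p K + n * (q' * q')) :=
          Finset.sum_le_sum (fun u _ => hub u)
      _ = n * qq n p K + (n:ℝ)^2 * (q' * q') := by
          rw [Finset.sum_const, Finset.card_univ, Fintype.card_fin, nsmul_eq_mul]
          ring
  have swap : ∑ f : Slots n → Bool, ∑ u : Fin n, ∑ v : Fin n,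
      (∏ s, if f s then p else 1-p) * (φK K (cnt (Tv n u) f) * φK K (cnt (Tv n v) f))
      = ∑ u : Fin n, ∑ v : Fin n, e u v := by
    rw [Finset.sum_comm]
    exact Finset.sum_congr rfl fun u _ => Finset.sum_comm
  simp only [expand]
  rw [swap]
  refine le_trans key ?_
  refine add_le_add le_rfl ?_
  -- q' ≤ q (1-p)⁻¹
  rcases hn2 with hn | hn
  · have hq'le : q' ≤ qq n p K * (1-p)⁻¹ := by
      have := qq_prime_le hn hp0 hp1 K
      rw [← mul_le_mul_iff_of_pos_right h1p]
      calc q' * (1-p) ≤ qq n p K := this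
        _ = qq n p K * (1-p)⁻¹ * (1-p) := by field_simp
    calc (n:ℝ)^2 * (q' * q') ≤ (n:ℝ)^2 * ((qq n p K * (1-p)⁻¹) * (qq n p K * (1-p)⁻¹)) := by
          apply mul_le_mul_of_nonneg_left _ (by positivity)
          exact mul_le_mul hq'le hq'le hq'0 (by positivity)
      _ = (n * qq n p K)^2 * ((1-p)⁻¹)^2 := by ring
  · -- n < 2 : then n - 2 = n - 1 = 0, q' = qq
    have h12 : n - 2 = n - 1 := by omega
    have hqeq : q' = qq n p K := by rw [hq', qq, h12]
    rw [hqeq]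
    have hinv : (1:ℝ) ≤ ((1-p)⁻¹)^2 := by
      have h1 : (1:ℝ) ≤ (1-p)⁻¹ := by
        rw [le_inv_comm₀ one_pos h1p]
        linarith
      nlinarith
    calc (n:ℝ)^2 * (qq n p K * qq n p K) = (n * qq n p K)^2 := by ring
      _ ≤ (n * qq n p K)^2 * ((1-p)⁻¹)^2 := le_mul_of_one_le_right (by positivity) hinv
end Main

section PerN

lemma grProb_transfer (n : ℕ) (hn : 1 ≤ n) (p : ℝ) (L : ℝ) (hL : 0 ≤ L) :
    grProb n p (fun G => (G.minDegree : ℝ) ≤ L)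
      = ∑ f : Slots n → Bool, (∏ s, if f s then p else 1-p)
          * (if (∃ v, cnt (Tv n v) f ≤ ⌊L⌋₊) then 1 else 0) := by
  rw [grProb_eq p _ (fun f => ∃ v, cnt (Tv n v) f ≤ ⌊L⌋₊) ?_]
  · exact Finset.sum_congr rfl fun f _ => by
      congr 1
      by_cases h : ∃ v, cnt (Tv n v) f ≤ ⌊L⌋₊
      · rw [if_pos h, if_pos h]
      · rw [if_neg h, if_neg h]
  intro G
  have : Nonempty (Fin n) := Fin.pos_iff_nonempty.1 (by omega)
  constructor
  · intro h
    obtain ⟨v, hv⟩ := G.exists_minimal_degree_vertex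
    refine ⟨v, ?_⟩
    rw [cnt_Tv_σG]
    rw [Nat.le_floor_iff hL]
    rw [hv] at h
    exact h
  · rintro ⟨v, hv⟩
    rw [cnt_Tv_σG] at hv
    have h1 : (G.minDegree : ℝ) ≤ (G.degree v : ℝ) := by
      exact_mod_cast G.minDegree_le_degree v
    have h2 : (G.degree v : ℝ) ≤ L := by
      calc (G.degree v : ℝ) ≤ (⌊L⌋₊ : ℝ) := by exact_mod_cast hv
        _ ≤ L := Nat.floor_le hL
    linarith

lemma grProb_le_one (n : ℕ) {p : ℝ} (hp0 : 0 ≤ p) (hp1 : p ≤ 1)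
    (Q : SimpleGraph (Fin n) → Prop) : grProb n p Q ≤ 1 := by
  have htrue : grProb n p (fun _ => True) = 1 := by
    rw [grProb_eq p (fun _ => True) (fun _ => True) (fun _ => Iff.rfl)]
    simp only [if_true, mul_one]
    exact EE_norm p
  rw [← htrue]
  unfold grProb
  apply Finset.sum_le_sum
  intro G _
  have hW : 0 ≤ p ^ edgeCount G * (1 - p) ^ (n.choose 2 - edgeCount G) := by
    have : (0:ℝ) ≤ 1 - p := by linarith
    positivity
  split
  · simp
  · simp [hW]

lemma grProb_nonneg (n : ℕ) {p : ℝ} (hp0 : 0 ≤ p) (hp1 : p ≤ 1)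
    (Q : SimpleGraph (Fin n) → Prop) : 0 ≤ grProb n p Q := by
  unfold grProb
  apply Finset.sum_nonneg
  intro G _
  have h1 : (0:ℝ) ≤ 1 - p := by linarith
  split
  · positivity
  · exact le_refl 0

/-- The key per-n lower bound via the second-moment method. -/
lemma grProb_ge (n : ℕ) (hn : 1 ≤ n) {p : ℝ} (hp0 : 0 ≤ p) (hp1 : p < 1)
    (L : ℝ) (hL : 0 ≤ L) (hq : 0 < (n : ℝ) * qq n p ⌊L⌋₊) :
    ((n : ℝ) * qq n p ⌊L⌋₊)^2
      / ((n : ℝ) * qq n p ⌊L⌋₊ + ((n : ℝ) * qq n p ⌊L⌋₊)^2 * ((1-p)⁻¹)^2)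
    ≤ grProb n p (fun G => (G.minDegree : ℝ) ≤ L) := by
  classical
  set K := ⌊L⌋₊ with hK
  set E1 := (n : ℝ) * qq n p K with hE1
  set P := grProb n p (fun G => (G.minDegree : ℝ) ≤ L) with hP
  have hwt : ∀ f : Slots n → Bool, 0 ≤ ∏ s, (if f s then p else 1-p) :=
    fun f => wt_nonneg hp0 hp1.le f
  set X : (Slots n → Bool) → ℝ := fun f => ∑ v : Fin n, φK K (cnt (Tv n v) f) with hX
  set indP : (Slots n → Bool) → ℝ :=
    fun f => if (∃ v, cnt (Tv n v) f ≤ K) then 1 else 0 with hindP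
  have hindX : ∀ f, indP f * X f = X f := by
    intro f
    show (if (∃ v, cnt (Tv n v) f ≤ K) then (1:ℝ) else 0) * X f = X f
    split
    · rw [one_mul]
    · rename_i hno
      push_neg at hno
      have : X f = 0 := by
        rw [hX]
        apply Finset.sum_eq_zero
        intro v _
        unfold φK
        rw [if_neg (by exact Nat.not_le.2 (hno v))]
      rw [this, mul_zero]
  -- Cauchy–Schwarz
  have CS := Finset.sum_mul_sq_le_sq_mul_sq Finset.univ
    (fun f : Slots n → Bool => Real.sqrt (∏ s, if f s then p else 1-p) * indP f)
    (fun f : Slots n → Bool => Real.sqrt (∏ s, if f s then p else 1-p) * X f)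
  have hterm1 : ∀ f : Slots n → Bool,
      (Real.sqrt (∏ s, if f s then p else 1-p) * indP f)
        * (Real.sqrt (∏ s, if f s then p else 1-p) * X f)
      = (∏ s, if f s then p else 1-p) * X f := by
    intro f
    have : Real.sqrt (∏ s, if f s then p else 1-p) * indP f
        * (Real.sqrt (∏ s, if f s then p else 1-p) * X f)
        = (Real.sqrt (∏ s, if f s then p else 1-p))^2 * (indP f * X f) := by ring
    rw [this, Real.sq_sqrt (hwt f), hindX]
  have hterm2 : ∀ f : Slots n → Bool,
      (Real.sqrt (∏ s, if f s then p else 1-p) * indP f)^2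
      = (∏ s, if f s then p else 1-p) * indP f := by
    intro f
    have hsq : indP f ^ 2 = indP f := by
      show (if (∃ v, cnt (Tv n v) f ≤ K) then (1:ℝ) else 0)^2
        = (if (∃ v, cnt (Tv n v) f ≤ K) then (1:ℝ) else 0)
      split <;> norm_num
    rw [mul_pow, Real.sq_sqrt (hwt f), hsq]
  have hterm3 : ∀ f : Slots n → Bool,
      (Real.sqrt (∏ s, if f s then p else 1-p) * X f)^2
      = (∏ s, if f s then p else 1-p) * X f ^ 2 := by
    intro f
    rw [mul_pow, Real.sq_sqrt (hwt f)]
  simp only [hterm1, hterm2, hterm3] at CS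
  rw [first_moment] at CS
  have hPsum : P = ∑ f : Slots n → Bool, (∏ s, if f s then p else 1-p) * indP f := by
    rw [hP, grProb_transfer n hn p L hL]
  have hsm := second_moment (n := n) hp0 hp1 K
  have hX2nonneg : (0:ℝ) ≤ ∑ f : Slots n → Bool, (∏ s, if f s then p else 1-p) * X f ^ 2 := by
    apply Finset.sum_nonneg
    intro f _
    exact mul_nonneg (hwt f) (sq_nonneg _)
  have hPnonneg : 0 ≤ P := grProb_nonneg n hp0 hp1.le _
  have key : E1^2 ≤ P * (E1 + E1^2 * ((1-p)⁻¹)^2) := by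
    calc E1^2 ≤ (∑ f : Slots n → Bool, (∏ s, if f s then p else 1-p) * indP f)
          * ∑ f : Slots n → Bool, (∏ s, if f s then p else 1-p) * X f ^ 2 := CS
      _ ≤ (∑ f : Slots n → Bool, (∏ s, if f s then p else 1-p) * indP f)
          * (E1 + E1^2 * ((1-p)⁻¹)^2) := by
          apply mul_le_mul_of_nonneg_left hsm
          rw [← hPsum]
          exact hPnonneg
      _ = P * (E1 + E1^2 * ((1-p)⁻¹)^2) := by rw [← hPsum]
  have hden : 0 < E1 + E1^2 * ((1-p)⁻¹)^2 := by
    have h1p : (0:ℝ) < 1 - p := by linarith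
    have : (0:ℝ) ≤ E1^2 * ((1-p)⁻¹)^2 := by positivity
    linarith
  rw [div_le_iff₀ hden]
  exact key

end PerN

section Asymp
open Real

lemma exp_32_le : Real.exp 3.2 ≤ 30 := by
  have h5 : Real.exp 3.2 ^ (5:ℕ) = Real.exp 1 ^ (16:ℕ) := by
    rw [← Real.exp_nat_mul, ← Real.exp_nat_mul]
    norm_num
  have he : Real.exp 1 ^ (16:ℕ) ≤ 2.7182818286 ^ (16:ℕ) :=
    pow_le_pow_left₀ (Real.exp_pos 1).le Real.exp_one_lt_d9.le 16
  have hnum : (2.7182818286:ℝ) ^ (16:ℕ) ≤ 30 ^ (5:ℕ) := by norm_num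
  have hfin : Real.exp 3.2 ^ (5:ℕ) ≤ 30 ^ (5:ℕ) := by
    rw [h5]; exact he.trans hnum
  exact le_of_pow_le_pow_left₀ (by norm_num) (by norm_num) hfin

set_option maxHeartbeats 1000000 in
lemma nq_lower {n : ℕ} {p : ℝ} (hp0 : 0 ≤ p)
    (h1 : 30 ≤ Real.log n)
    (h2 : Real.log n + 1 ≤ n * p)
    (h3 : p ≤ 1.1 * Real.log n / n)
    (h4 : (Real.log n)^2 / n ≤ 1/100) :
    Real.exp (Real.log n / 150 - 5.2) ≤ (n:ℝ) * qq n p ⌊Real.log n / 30⌋₊ := by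
  set L := Real.log n with hLdef
  set K := ⌊L/30⌋₊ with hKdef
  -- basic facts
  have hn2 : 2 ≤ n := by
    by_contra hc
    interval_cases n <;> simp_all <;> norm_num at h1
  have hn0 : (0:ℝ) < n := by positivity
  have hn0' : (2:ℝ) ≤ n := by exact_mod_cast hn2
  have hL30 : (1:ℝ) ≤ L/30 := by linarith
  have hK1 : 1 ≤ K := Nat.le_floor (by exact_mod_cast hL30)
  have hK0 : (0:ℝ) < K := by exact_mod_cast hK1
  have hKL : (K:ℝ) ≤ L/30 := Nat.floor_le (by linarith)
  have hL2n : L^2 ≤ n/100 := by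
    rw [div_le_div_iff₀ hn0 (by norm_num)] at h4
    linarith
  have hLn : L ≤ n/3000 := by nlinarith
  have hKn1 : K ≤ n - 1 := by
    have hc : (K:ℝ) ≤ ((n-1:ℕ):ℝ) := by
      rw [Nat.cast_sub (by omega)]
      push_cast
      nlinarith
    exact_mod_cast hc
  have hKn : K ≤ n := le_trans hKn1 (by omega)
  have hphalf : p ≤ 1/2 := by
    have : 1.1 * L / n ≤ 1.1/3000 := by
      rw [div_le_div_iff₀ hn0 (by norm_num)]
      nlinarith
    linarith
  have h1p : (0:ℝ) < 1 - p := by linarith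
  have hppos : 0 < p := by nlinarith
  have hnp_up : (n:ℝ) * p ≤ 1.1 * L := by
    have h := (le_div_iff₀ hn0).1 h3
    nlinarith
  have hL0 : (0:ℝ) ≤ 1.1 * L := by linarith
  have hnp2 : (n:ℝ) * p^2 ≤ 1 := by
    calc (n:ℝ) * p^2 = ((n:ℝ)*p)*p := by ring
      _ ≤ (1.1*L)*(1.1*L/n) := mul_le_mul hnp_up h3 hp0 hL0
      _ = 1.21 * (L^2/n) := by ring
      _ ≤ 1.21 * (1/100) := by linarith
      _ ≤ 1 := by norm_num
  have hKp : (K:ℝ) * p ≤ 1 := by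
    calc (K:ℝ) * p ≤ (L/30)*(1.1*L/n) := mul_le_mul hKL h3 hp0 (by linarith)
      _ = (1.1/30) * (L^2/n) := by ring
      _ ≤ (1.1/30) * (1/100) := by linarith
      _ ≤ 1 := by norm_num
  -- single term lower bound for qq
  have hterm : ((n-1).choose K : ℝ) * p^K * (1-p)^(n-1-K) ≤ qq n p K := by
    unfold qq bin
    have hmem : K ∈ Finset.range (n-1+1) := Finset.mem_range.2 (by omega)
    have := Finset.single_le_sum
      (f := fun j => ((n-1).choose j : ℝ) * p^j * (1-p)^(n-1-j) * φK K j)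
      (fun j _ => by
        have := φK_nonneg K j
        have h1p' := h1p.le
        positivity) hmem
    have hφ : φK K K = 1 := by unfold φK; rw [if_pos le_rfl]
    simp only [hφ, mul_one] at this
    exact this
  -- choose lower bound
  have hchoose : ((n-K:ℕ):ℝ)^K / (K:ℝ)^K ≤ ((n-1).choose K : ℝ) := by
    have t1 := Nat.pow_le_choose (α := ℝ) K (n-1)
    rw [show n-1+1 = n by omega] at t1
    refine le_trans ?_ t1
    apply div_le_div_of_nonneg_left (by positivity) ?_ ?_
    · exact_mod_cast Nat.factorial_pos K
    · exact_mod_cast Nat.factorial_le_pow K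
  have hcast : ((n-K:ℕ):ℝ) = (n:ℝ) - K := by
    rw [Nat.cast_sub hKn]
  -- ratio bound
  have hr30 : 30 ≤ ((n:ℝ) - K) * p / K := by
    rw [le_div_iff₀ hK0]
    have h30K : 30*(K:ℝ) ≤ L := by linarith
    have hexp : ((n:ℝ)-K)*p = (n:ℝ)*p - (K:ℝ)*p := by ring
    linarith
  have hrpow : (30:ℝ)^K ≤ (((n:ℝ) - K) * p / K)^K :=
    pow_le_pow_left₀ (by norm_num) hr30 K
  have h30exp : Real.exp (3.2*(L/30 - 1)) ≤ (30:ℝ)^K := by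
    have ha : Real.exp 3.2 ^ K ≤ (30:ℝ)^K := pow_le_pow_left₀ (Real.exp_pos _).le exp_32_le K
    have hb : Real.exp 3.2 ^ K = Real.exp (K * 3.2) := by
      rw [Real.exp_nat_mul]
    have hc : L/30 - 1 ≤ (K:ℝ) := by
      have := Nat.lt_floor_add_one (L/30)
      push_cast at this ⊢
      linarith
    calc Real.exp (3.2*(L/30 - 1)) ≤ Real.exp ((K:ℝ) * 3.2) := by
          apply Real.exp_le_exp.2
          linarith
      _ = Real.exp 3.2 ^ K := hb.symm
      _ ≤ (30:ℝ)^K := ha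
  -- (1-p)^(n-1) lower bound
  have hq2 : Real.exp (-(1.1*L) - 2) ≤ (1-p)^(n-1) := by
    have ha : Real.exp (-(p/(1-p))) ≤ 1 - p := by
      have hlog := Real.log_le_sub_one_of_pos (show (0:ℝ) < (1-p)⁻¹ by positivity)
      rw [Real.log_inv] at hlog
      have heq : (1-p)⁻¹ - 1 = p/(1-p) := by field_simp; ring
      calc Real.exp (-(p/(1-p))) ≤ Real.exp (Real.log (1-p)) := by
            apply Real.exp_le_exp.2
            rw [← heq]
            linarith
        _ = 1 - p := Real.exp_log h1p
    have hb : Real.exp (-(p/(1-p))) ^ (n-1) ≤ (1-p)^(n-1) :=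
      pow_le_pow_left₀ (Real.exp_pos _).le ha _
    have hc : Real.exp (-(p/(1-p))) ^ (n-1) = Real.exp (((n-1:ℕ):ℝ) * (-(p/(1-p)))) := by
      rw [Real.exp_nat_mul]
    have hd : ((n-1:ℕ):ℝ) * (p/(1-p)) ≤ 1.1*L + 2 := by
      have hpp : 0 ≤ p/(1-p) := by positivity
      have h5 : ((n-1:ℕ):ℝ) ≤ (n:ℝ) := by
        rw [Nat.cast_sub (by omega)]
        linarith
      have h6 : ((n-1:ℕ):ℝ) * (p/(1-p)) ≤ (n:ℝ) * (p/(1-p)) :=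
        mul_le_mul_of_nonneg_right h5 hpp
      have h7 : (n:ℝ) * (p/(1-p)) ≤ (n:ℝ) * p * (1+2*p) := by
        rw [mul_div_assoc', div_le_iff₀ h1p]
        nlinarith
      have h8 : (n:ℝ) * p * (1+2*p) = (n:ℝ)*p + 2*((n:ℝ)*p^2) := by ring
      nlinarith
    calc Real.exp (-(1.1*L) - 2) ≤ Real.exp (((n-1:ℕ):ℝ) * (-(p/(1-p)))) := by
          apply Real.exp_le_exp.2
          nlinarith
      _ = Real.exp (-(p/(1-p))) ^ (n-1) := hc.symm
      _ ≤ (1-p)^(n-1) := hb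
  -- assemble
  have hfinal : (n:ℝ) * (Real.exp (3.2*(L/30-1)) * Real.exp (-(1.1*L) - 2))
      ≤ (n:ℝ) * qq n p K := by
    have c1 : Real.exp (3.2*(L/30-1)) * Real.exp (-(1.1*L) - 2)
        ≤ (((n:ℝ) - K) * p / K)^K * (1-p)^(n-1) := by
      apply mul_le_mul (le_trans h30exp hrpow) hq2 (Real.exp_pos _).le
      positivity
    have c2 : (((n:ℝ) - K) * p / K)^K * (1-p)^(n-1)
        ≤ ((n-1).choose K : ℝ) * p^K * (1-p)^(n-1-K) := by
      have e1 : (((n:ℝ) - K) * p / K)^K = ((n-K:ℕ):ℝ)^K / (K:ℝ)^K * p^K := by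
        rw [hcast, div_pow, mul_pow]
        ring
      rw [e1]
      have e2 : (1-p)^(n-1) ≤ (1-p)^(n-1-K) :=
        pow_le_pow_of_le_one h1p.le (by linarith) (by omega)
      apply mul_le_mul ?_ e2 (by positivity) ?_
      · exact mul_le_mul_of_nonneg_right hchoose (by positivity)
      · positivity
    have := le_trans c1 (le_trans c2 hterm)
    exact mul_le_mul_of_nonneg_left this hn0.le
  refine le_trans ?_ hfinal
  have hnexp : (n:ℝ) = Real.exp L := (Real.exp_log hn0).symm
  rw [hnexp, ← Real.exp_add, ← Real.exp_add]
  apply Real.exp_le_exp.2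
  ring_nf
  linarith
end Asymp

section Final
open Real

lemma p_half {n : ℕ} {p : ℝ} (h1 : 30 ≤ Real.log n) (h3 : p ≤ 1.1 * Real.log n / n)
    (h4 : (Real.log n)^2 / n ≤ 1/100) : p ≤ 1/2 := by
  have hn2 : 2 ≤ n := by
    by_contra hc
    push_neg at hc
    interval_cases n
    · rw [Nat.cast_zero, Real.log_zero] at h1; linarith
    · rw [Nat.cast_one, Real.log_one] at h1; linarith
  set L := Real.log n
  have hn0 : (0:ℝ) < n := by positivity
  have hL2n : L^2 ≤ n/100 := by
    rw [div_le_div_iff₀ hn0 (by norm_num)] at h4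
    linarith
  have hLn : L ≤ n/3000 := by nlinarith
  have : 1.1 * L / n ≤ 1.1/3000 := by
    rw [div_le_div_iff₀ hn0 (by norm_num)]
    nlinarith
  linarith

lemma log_sq_div_tendsto :
    Filter.Tendsto (fun n : ℕ => (Real.log n)^2 / n) Filter.atTop (nhds 0) := by
  have h := Real.tendsto_pow_log_div_mul_add_atTop 1 0 2 one_ne_zero
  have h2 : Filter.Tendsto (fun x : ℝ => (Real.log x)^2 / x) Filter.atTop (nhds 0) := by
    refine h.congr fun x => by rw [one_mul, add_zero]
  exact h2.comp tendsto_natCast_atTop_atTop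

lemma log_div_tendsto :
    Filter.Tendsto (fun n : ℕ => Real.log n / n) Filter.atTop (nhds 0) := by
  have h := Real.tendsto_pow_log_div_mul_add_atTop 1 0 1 one_ne_zero
  have h2 : Filter.Tendsto (fun x : ℝ => Real.log x / x) Filter.atTop (nhds 0) := by
    refine h.congr fun x => by rw [one_mul, add_zero, pow_one]
  exact h2.comp tendsto_natCast_atTop_atTop

lemma log_nat_tendsto :
    Filter.Tendsto (fun n : ℕ => Real.log n) Filter.atTop Filter.atTop :=
  Real.tendsto_log_atTop.comp tendsto_natCast_atTop_atTop

theorem aas_minDegree_le' (p : ℕ → ℝ) (hp0 : ∀ n, 0 ≤ p n) (hp1 : ∀ n, p n ≤ 1)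
    (hlow : Filter.Tendsto (fun n : ℕ => (n : ℝ) * p n - Real.log n) Filter.atTop Filter.atTop)
    (hhigh : ∀ᶠ n : ℕ in Filter.atTop, p n ≤ 1.1 * Real.log n / n) :
    Filter.Tendsto
      (fun n : ℕ => grProb n (p n) fun G => (G.minDegree : ℝ) ≤ Real.log n / 30)
      Filter.atTop (nhds 1) := by
  classical
  set E : ℕ → ℝ := fun n => (n:ℝ) * qq n (p n) ⌊Real.log n / 30⌋₊ with hE
  -- eventual conditions
  have hA : ∀ᶠ n : ℕ in Filter.atTop, 30 ≤ Real.log n :=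
    log_nat_tendsto.eventually_ge_atTop 30
  have hB : ∀ᶠ n : ℕ in Filter.atTop, Real.log n + 1 ≤ (n:ℝ) * p n := by
    filter_upwards [hlow.eventually_ge_atTop 1] with n hn
    linarith
  have hD : ∀ᶠ n : ℕ in Filter.atTop, (Real.log n)^2 / n ≤ 1/100 :=
    log_sq_div_tendsto.eventually (eventually_le_nhds (by norm_num))
  -- E tends to infinity
  have hEtop : Filter.Tendsto E Filter.atTop Filter.atTop := by
    apply Filter.tendsto_atTop_mono' Filter.atTop
      (show ∀ᶠ n : ℕ in Filter.atTop,
        Real.exp (Real.log n / 150 - 5.2) ≤ E n by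
          filter_upwards [hA, hB, hhigh, hD] with n h1 h2 h3 h4
          have : Real.log n / 30 = Real.log n / 30 := rfl
          exact nq_lower (hp0 n) h1 h2 h3 h4)
    have harg : Filter.Tendsto (fun n : ℕ => Real.log n / 150 - 5.2)
        Filter.atTop Filter.atTop := by
      apply Filter.tendsto_atTop_add_const_right
      exact (log_nat_tendsto).atTop_div_const (by norm_num)
    exact Real.tendsto_exp_atTop.comp harg
  -- p tends to 0
  have hp_to0 : Filter.Tendsto p Filter.atTop (nhds 0) := by
    have hub : Filter.Tendsto (fun n : ℕ => 1.1 * Real.log n / n) Filter.atTop (nhds 0) := by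
      have := log_div_tendsto.const_mul (1.1:ℝ)
      simpa [mul_div_assoc] using this
    refine tendsto_of_tendsto_of_tendsto_of_le_of_le' tendsto_const_nhds hub
      (Filter.Eventually.of_forall fun n => hp0 n) hhigh
  -- lower bound function tends to 1
  have hc_tendsto : Filter.Tendsto (fun n : ℕ => ((1 - p n)⁻¹)^2) Filter.atTop (nhds 1) := by
    have h1 : Filter.Tendsto (fun n : ℕ => 1 - p n) Filter.atTop (nhds 1) := by
      have := (tendsto_const_nhds (x := (1:ℝ)) (f := Filter.atTop (α := ℕ))).sub hp_to0
      simpa using this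
    have h2 : Filter.Tendsto (fun n : ℕ => (1 - p n)⁻¹) Filter.atTop (nhds 1) := by
      have := h1.inv₀ (by norm_num)
      simpa using this
    have := h2.pow 2
    simpa using this
  have hEinv : Filter.Tendsto (fun n : ℕ => (E n)⁻¹) Filter.atTop (nhds 0) :=
    hEtop.inv_tendsto_atTop
  have hlb_tendsto : Filter.Tendsto
      (fun n : ℕ => 1/((E n)⁻¹ + ((1 - p n)⁻¹)^2)) Filter.atTop (nhds 1) := by
    have hsum : Filter.Tendsto (fun n : ℕ => (E n)⁻¹ + ((1 - p n)⁻¹)^2)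
        Filter.atTop (nhds 1) := by
      have := hEinv.add hc_tendsto
      simpa using this
    have := hsum.inv₀ (by norm_num)
    simpa [one_div] using this
  -- sandwich
  have hup : ∀ᶠ n : ℕ in Filter.atTop,
      grProb n (p n) (fun G => (G.minDegree : ℝ) ≤ Real.log n / 30) ≤ 1 :=
    Filter.Eventually.of_forall fun n => grProb_le_one n (hp0 n) (hp1 n) _
  have hlb : ∀ᶠ n : ℕ in Filter.atTop,
      1/((E n)⁻¹ + ((1 - p n)⁻¹)^2)
        ≤ grProb n (p n) (fun G => (G.minDegree : ℝ) ≤ Real.log n / 30) := by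
    filter_upwards [hA, hhigh, hD, hEtop.eventually_gt_atTop 0] with n h1 h3 h4 hEpos
    have hn1 : 1 ≤ n := by
      by_contra hc
      interval_cases n
      norm_num at h1
    have hphalf : p n ≤ 1/2 := p_half h1 h3 h4
    have hp1' : p n < 1 := by linarith
    have hL0 : (0:ℝ) ≤ Real.log n / 30 := by linarith
    have hge := grProb_ge n hn1 (hp0 n) hp1' (Real.log n / 30) hL0 ?_
    · refine le_trans (le_of_eq ?_) hge
      have hEne : E n ≠ 0 := ne_of_gt hEpos
      have h1p : (0:ℝ) < 1 - p n := by linarith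
      have hcpos : (0:ℝ) < ((1 - p n)⁻¹)^2 := by positivity
      have hden1 : (0:ℝ) < (E n)⁻¹ + ((1 - p n)⁻¹)^2 := by positivity
      have hden2 : (0:ℝ) < E n + (E n)^2 * ((1 - p n)⁻¹)^2 := by positivity
      rw [div_eq_div_iff hden1.ne' hden2.ne']
      field_simp
      ring
    · exact hEpos
  exact tendsto_of_tendsto_of_tendsto_of_le_of_le' hlb_tendsto tendsto_const_nhds hlb hup

end Final

theorem aas_minDegree_le (p : ℕ → ℝ) (hp0 : ∀ n, 0 ≤ p n) (hp1 : ∀ n, p n ≤ 1)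
    (hlow : Filter.Tendsto (fun n : ℕ => (n : ℝ) * p n - Real.log n) Filter.atTop Filter.atTop)
    (hhigh : ∀ᶠ n : ℕ in Filter.atTop, p n ≤ 1.1 * Real.log n / n) :
    Filter.Tendsto
      (fun n : ℕ => grProb n (p n) fun G => (G.minDegree : ℝ) ≤ Real.log n / 30)
      Filter.atTop (nhds 1) := aas_minDegree_le' p hp0 hp1 hlow hhigh
end

section
/- If (log n + ω(1))/n ≤ p ≤ (1.1 log n)/n, then asymptotically almost surely the random graph G ~ G(n,p) has at most n^{1/2} vertices of degree at most log n / 6. -/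
open scoped Classical
open Filter

private lemma sum_powerset_prod {α : Type*} [DecidableEq α] (f : α → ℝ) (y : ℝ) (T : Finset α) :
    ∑ s ∈ T.powerset, (∏ e ∈ s, f e) * y ^ (T.card - s.card) = ∏ e ∈ T, (f e + y) := by
  rw [Finset.prod_add]
  refine Finset.sum_congr rfl fun s hs => ?_
  rw [Finset.mem_powerset] at hs
  rw [Finset.prod_const, Finset.card_sdiff_of_subset hs]

private lemma sum_graph_eq (n : ℕ) (F : Finset (Sym2 (Fin n)) → ℝ) :
    ∑ G : SimpleGraph (Fin n), F G.edgeFinset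
      = ∑ s ∈ (⊤ : SimpleGraph (Fin n)).edgeFinset.powerset, F s := by
  refine Finset.sum_nbij' (fun G => G.edgeFinset) (fun s => SimpleGraph.fromEdgeSet ↑s)
    (fun G _ => Finset.mem_powerset.2 (SimpleGraph.edgeFinset_mono le_top))
    (fun s _ => Finset.mem_univ _) (fun G _ => ?_) (fun s hs => ?_) (fun G _ => rfl)
  · show SimpleGraph.fromEdgeSet ↑G.edgeFinset = G
    rw [SimpleGraph.coe_edgeFinset, SimpleGraph.fromEdgeSet_edgeSet]
  · rw [Finset.mem_powerset] at hs
    apply Finset.coe_injective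
    rw [SimpleGraph.coe_edgeFinset, SimpleGraph.edgeSet_fromEdgeSet]
    ext e
    simp only [Set.mem_diff, Set.mem_setOf_eq, Finset.mem_coe, and_iff_left_iff_imp]
    intro hes
    have := hs hes
    rw [SimpleGraph.mem_edgeFinset, SimpleGraph.edgeSet_top] at this
    exact this

private lemma total_mass (n : ℕ) (p : ℝ) :
    ∑ G : SimpleGraph (Fin n),
      p ^ edgeCount G * (1 - p) ^ (n.choose 2 - edgeCount G) = 1 := by
  have hK : (⊤ : SimpleGraph (Fin n)).edgeFinset.card = n.choose 2 := by
    rw [SimpleGraph.card_edgeFinset_top_eq_card_choose_two, Fintype.card_fin]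
  calc ∑ G : SimpleGraph (Fin n), p ^ edgeCount G * (1 - p) ^ (n.choose 2 - edgeCount G)
      = ∑ s ∈ (⊤ : SimpleGraph (Fin n)).edgeFinset.powerset,
          p ^ s.card * (1 - p) ^ (n.choose 2 - s.card) :=
        sum_graph_eq n (fun s => p ^ s.card * (1 - p) ^ (n.choose 2 - s.card))
    _ = ∑ s ∈ (⊤ : SimpleGraph (Fin n)).edgeFinset.powerset,
          (∏ _e ∈ s, p) * (1 - p) ^ ((⊤ : SimpleGraph (Fin n)).edgeFinset.card - s.card) := by
        rw [hK]; simp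
    _ = ∏ _e ∈ (⊤ : SimpleGraph (Fin n)).edgeFinset, (p + (1 - p)) :=
        sum_powerset_prod (fun _ => p) (1 - p) _
    _ = 1 := by simp

private lemma degree_eq_inter_card {n : ℕ} (G : SimpleGraph (Fin n)) (v : Fin n) :
    G.degree v = (G.edgeFinset ∩ (⊤ : SimpleGraph (Fin n)).incidenceFinset v).card := by
  rw [← SimpleGraph.card_incidenceFinset_eq_degree]
  congr 1
  ext e
  simp only [Finset.mem_inter, SimpleGraph.mem_incidenceFinset, SimpleGraph.incidenceSet,
    Set.mem_setOf_eq, SimpleGraph.mem_edgeFinset, SimpleGraph.edgeSet_top]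
  constructor
  · rintro ⟨he, hv⟩
    exact ⟨he, G.not_isDiag_of_mem_edgeSet he, hv⟩
  · rintro ⟨he, _, hv⟩
    exact ⟨he, hv⟩

private lemma slice_bound (n : ℕ) {p : ℝ} (hp0 : 0 ≤ p) (hp1 : p ≤ 1) (t : ℝ) (v : Fin n) :
    ∑ G : SimpleGraph (Fin n),
        (if (G.degree v : ℝ) ≤ t then p ^ edgeCount G * (1 - p) ^ (n.choose 2 - edgeCount G)
          else 0)
      ≤ (6 : ℝ) ^ t * (1 - 5 * p / 6) ^ (n - 1) := by
  have hq : (0:ℝ) ≤ 1 - p := by linarith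
  set K := (⊤ : SimpleGraph (Fin n)).edgeFinset with hKdef
  set Ev := (⊤ : SimpleGraph (Fin n)).incidenceFinset v with hEvdef
  have hEvK : Ev ⊆ K := by
    intro e he
    rw [hEvdef, SimpleGraph.mem_incidenceFinset] at he
    exact SimpleGraph.mem_edgeFinset.2 he.1
  have hEvcard : Ev.card = n - 1 := by
    rw [hEvdef, SimpleGraph.card_incidenceFinset_eq_degree, SimpleGraph.complete_graph_degree,
      Fintype.card_fin]
  have hK : (n.choose 2) = K.card := by
    rw [hKdef, SimpleGraph.card_edgeFinset_top_eq_card_choose_two, Fintype.card_fin]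
  have h1 : ∑ G : SimpleGraph (Fin n),
        (if (G.degree v : ℝ) ≤ t then p ^ edgeCount G * (1 - p) ^ (n.choose 2 - edgeCount G)
          else 0)
      = ∑ s ∈ K.powerset, (if ((s ∩ Ev).card : ℝ) ≤ t
          then p ^ s.card * (1 - p) ^ (n.choose 2 - s.card) else 0) := by
    rw [← sum_graph_eq n (fun s => if ((s ∩ Ev).card : ℝ) ≤ t
          then p ^ s.card * (1 - p) ^ (n.choose 2 - s.card) else 0)]
    refine Finset.sum_congr rfl fun G _ => ?_
    rw [← degree_eq_inter_card G v]
    rfl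
  rw [h1]
  have h2 : ∀ s ∈ K.powerset, (if ((s ∩ Ev).card : ℝ) ≤ t
          then p ^ s.card * (1 - p) ^ (n.choose 2 - s.card) else 0)
      ≤ (6:ℝ) ^ t * ((∏ e ∈ s, (if e ∈ Ev then p/6 else p)) * (1 - p) ^ (K.card - s.card)) := by
    intro s hs
    rw [Finset.mem_powerset] at hs
    have hprod : (∏ e ∈ s, (if e ∈ Ev then p/6 else p))
        = (1/6:ℝ) ^ (s ∩ Ev).card * p ^ s.card := by
      rw [← Finset.prod_filter_mul_prod_filter_not s (fun e => e ∈ Ev)]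
      have e1 : ∏ e ∈ s.filter (fun e => e ∈ Ev), (if e ∈ Ev then p/6 else p)
          = (p/6) ^ (s ∩ Ev).card := by
        rw [← Finset.filter_mem_eq_inter]
        rw [← Finset.prod_const]
        exact Finset.prod_congr rfl fun e he => if_pos (Finset.mem_filter.1 he).2
      have e2 : ∏ e ∈ s.filter (fun e => ¬ e ∈ Ev), (if e ∈ Ev then p/6 else p)
          = p ^ (s.filter (fun e => ¬ e ∈ Ev)).card := by
        rw [← Finset.prod_const]
        exact Finset.prod_congr rfl fun e he => if_neg (Finset.mem_filter.1 he).2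
      rw [e1, e2]
      have hcards : (s ∩ Ev).card + (s.filter (fun e => ¬ e ∈ Ev)).card = s.card := by
        rw [← Finset.filter_mem_eq_inter]
        exact Finset.card_filter_add_card_filter_not _
      have : (p/6:ℝ) ^ (s ∩ Ev).card = (1/6:ℝ) ^ (s ∩ Ev).card * p ^ (s ∩ Ev).card := by
        rw [← mul_pow]; ring_nf
      rw [this, mul_assoc, ← pow_add, hcards]
    rw [hprod, hK]
    split_ifs with h
    · rw [show (6:ℝ) ^ t * ((1/6:ℝ) ^ (s ∩ Ev).card * p ^ s.card * (1 - p) ^ (K.card - s.card))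
        = ((6:ℝ) ^ t * (1/6:ℝ) ^ (s ∩ Ev).card) * (p ^ s.card * (1 - p) ^ (K.card - s.card))
        by ring]
      refine le_mul_of_one_le_left (by positivity) ?_
      have : ((6:ℝ) ^ t * (1/6:ℝ) ^ (s ∩ Ev).card) = (6:ℝ) ^ (t - ((s ∩ Ev).card : ℝ)) := by
        rw [Real.rpow_sub (by norm_num : (0:ℝ) < 6), one_div, inv_pow, ← Real.rpow_natCast 6,
          div_eq_mul_inv]
      rw [this]
      calc (1:ℝ) = (6:ℝ) ^ (0:ℝ) := (Real.rpow_zero 6).symm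
        _ ≤ (6:ℝ) ^ (t - ((s ∩ Ev).card : ℝ)) :=
          Real.rpow_le_rpow_of_exponent_le (by norm_num) (by linarith)
    · have : (0:ℝ) ≤ (1/6:ℝ) ^ (s ∩ Ev).card * p ^ s.card * (1 - p) ^ (K.card - s.card) := by
        positivity
      have h6 : (0:ℝ) ≤ (6:ℝ) ^ t := Real.rpow_nonneg (by norm_num) t
      nlinarith
  calc ∑ s ∈ K.powerset, (if ((s ∩ Ev).card : ℝ) ≤ t
          then p ^ s.card * (1 - p) ^ (n.choose 2 - s.card) else 0)
      ≤ ∑ s ∈ K.powerset,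
          (6:ℝ) ^ t * ((∏ e ∈ s, (if e ∈ Ev then p/6 else p)) * (1 - p) ^ (K.card - s.card)) :=
        Finset.sum_le_sum h2
    _ = (6:ℝ) ^ t * ∑ s ∈ K.powerset,
          ((∏ e ∈ s, (if e ∈ Ev then p/6 else p)) * (1 - p) ^ (K.card - s.card)) := by
        rw [Finset.mul_sum]
    _ = (6:ℝ) ^ t * ∏ e ∈ K, ((if e ∈ Ev then p/6 else p) + (1 - p)) := by
        rw [sum_powerset_prod]
    _ = (6:ℝ) ^ t * (1 - 5 * p / 6) ^ (n - 1) := by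
        congr 1
        rw [← Finset.prod_subset hEvK (fun e _ heEv => by rw [if_neg heEv]; ring)]
        rw [show ∏ e ∈ Ev, ((if e ∈ Ev then p/6 else p) + (1 - p)) = ∏ _e ∈ Ev, (1 - 5*p/6)
          from Finset.prod_congr rfl fun e he => by rw [if_pos he]; ring]
        rw [Finset.prod_const, hEvcard]

private lemma main_bound (n : ℕ) (hn : 1 ≤ n) {p : ℝ} (hp0 : 0 ≤ p) (hp1 : p ≤ 1) :
    1 - grProb n p (fun G =>
        (((Finset.univ.filter fun v => (G.degree v : ℝ) ≤ Real.log n / 6).card : ℝ))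
          ≤ Real.sqrt n)
      ≤ Real.sqrt n * ((6:ℝ) ^ (Real.log n / 6) * (1 - 5*p/6) ^ (n-1)) := by
  set t : ℝ := Real.log n / 6 with ht
  set c : ℝ := Real.sqrt n with hc
  have hn0 : (0:ℝ) < n := by exact_mod_cast hn
  have hc0 : 0 < c := Real.sqrt_pos.2 hn0
  set w : SimpleGraph (Fin n) → ℝ :=
    fun G => p ^ edgeCount G * (1-p) ^ (n.choose 2 - edgeCount G) with hw
  have hw0 : ∀ G, 0 ≤ w G := fun G => mul_nonneg (pow_nonneg hp0 _) (pow_nonneg (by linarith) _)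
  set Q : SimpleGraph (Fin n) → Prop := fun G =>
    (((Finset.univ.filter fun v => (G.degree v : ℝ) ≤ t).card : ℝ)) ≤ c with hQ
  have step1 : 1 - grProb n p Q = ∑ G : SimpleGraph (Fin n), (if ¬ Q G then w G else 0) := by
    rw [grProb]
    nth_rewrite 1 [← total_mass n p]
    rw [← Finset.sum_sub_distrib]
    refine Finset.sum_congr rfl fun G _ => ?_
    by_cases h : Q G <;> simp [h, hw]
  have step2 : ∀ G : SimpleGraph (Fin n), (if ¬ Q G then w G else 0)
      ≤ c⁻¹ * ∑ v : Fin n, (if (G.degree v : ℝ) ≤ t then w G else 0) := by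
    intro G
    have hsum : ∑ v : Fin n, (if (G.degree v : ℝ) ≤ t then w G else 0)
        = ((Finset.univ.filter fun v => (G.degree v : ℝ) ≤ t).card : ℝ) * w G := by
      rw [← Finset.sum_filter, Finset.sum_const, nsmul_eq_mul]
    rw [hsum]
    by_cases h : Q G
    · rw [if_neg (not_not_intro h)]
      have : (0:ℝ) ≤ ((Finset.univ.filter fun v => (G.degree v : ℝ) ≤ t).card : ℝ) * w G :=
        mul_nonneg (Nat.cast_nonneg _) (hw0 G)
      positivity
    · rw [if_pos h]
      have hlt : c < ((Finset.univ.filter fun v => (G.degree v : ℝ) ≤ t).card : ℝ) := by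
        simpa [hQ] using h
      have h1 : w G = c⁻¹ * (c * w G) := by
        rw [← mul_assoc, inv_mul_cancel₀ (ne_of_gt hc0), one_mul]
      nth_rewrite 1 [h1]
      exact mul_le_mul_of_nonneg_left
        (mul_le_mul_of_nonneg_right hlt.le (hw0 G)) (inv_nonneg.2 hc0.le)
  have step3 : ∑ G : SimpleGraph (Fin n), (if ¬ Q G then w G else 0)
      ≤ c⁻¹ * ((n:ℝ) * ((6:ℝ) ^ t * (1 - 5*p/6) ^ (n-1))) := by
    calc ∑ G : SimpleGraph (Fin n), (if ¬ Q G then w G else 0)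
        ≤ ∑ G : SimpleGraph (Fin n), c⁻¹ * ∑ v : Fin n, (if (G.degree v : ℝ) ≤ t then w G else 0) :=
          Finset.sum_le_sum fun G _ => step2 G
      _ = c⁻¹ * ∑ v : Fin n, ∑ G : SimpleGraph (Fin n),
            (if (G.degree v : ℝ) ≤ t then w G else 0) := by
          rw [← Finset.mul_sum, Finset.sum_comm]
      _ ≤ c⁻¹ * ∑ _v : Fin n, ((6:ℝ) ^ t * (1 - 5*p/6) ^ (n-1)) := by
          refine mul_le_mul_of_nonneg_left (Finset.sum_le_sum fun v _ => ?_) (by positivity)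
          exact slice_bound n hp0 hp1 t v
      _ = c⁻¹ * ((n:ℝ) * ((6:ℝ) ^ t * (1 - 5*p/6) ^ (n-1))) := by
          rw [Finset.sum_const, Finset.card_univ, Fintype.card_fin, nsmul_eq_mul]
  have hcn : c⁻¹ * (n:ℝ) = c := by
    have : c * c = (n:ℝ) := Real.mul_self_sqrt (le_of_lt hn0)
    field_simp
    linarith [this]
  calc 1 - grProb n p Q ≤ c⁻¹ * ((n:ℝ) * ((6:ℝ) ^ t * (1 - 5*p/6) ^ (n-1))) :=
        step1 ▸ step3
    _ = c * ((6:ℝ) ^ t * (1 - 5*p/6) ^ (n-1)) := by rw [← mul_assoc, hcn]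

private lemma log_six_lt_two : Real.log 6 < 2 := by
  rw [Real.log_lt_iff_lt_exp (by norm_num : (0:ℝ) < 6)]
  have h := Real.exp_one_gt_d9
  have : Real.exp 2 = Real.exp 1 * Real.exp 1 := by
    rw [← Real.exp_add]; norm_num
  nlinarith

private lemma bound_le_exp (n : ℕ) (hn : 1 ≤ n) {p : ℝ} (hp0 : 0 ≤ p) (hp1 : p ≤ 1) :
    Real.sqrt n * ((6:ℝ) ^ (Real.log n / 6) * (1 - 5*p/6) ^ (n-1))
      ≤ Real.exp (5/6 - 5/6 * ((n:ℝ) * p - Real.log n)) := by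
  have hn0 : (0:ℝ) < n := by exact_mod_cast hn
  have hL : 0 ≤ Real.log n := Real.log_nonneg (by exact_mod_cast hn)
  have h1 : Real.sqrt n = Real.exp (Real.log n * (1/2)) := by
    rw [Real.sqrt_eq_rpow, Real.rpow_def_of_pos hn0]
  have h2 : (6:ℝ) ^ (Real.log n / 6) = Real.exp (Real.log 6 * (Real.log n / 6)) :=
    Real.rpow_def_of_pos (by norm_num) _
  have h3 : (1 - 5*p/6) ^ (n-1) ≤ Real.exp (-(5*p/6) * ((n:ℝ) - 1)) := by
    have hb : (0:ℝ) ≤ 1 - 5*p/6 := by linarith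
    have hle : 1 - 5*p/6 ≤ Real.exp (-(5*p/6)) := by
      have := Real.add_one_le_exp (-(5*p/6))
      linarith
    calc (1 - 5*p/6) ^ (n-1) ≤ (Real.exp (-(5*p/6))) ^ (n-1) := pow_le_pow_left₀ hb hle _
      _ = Real.exp (-(5*p/6) * ((n:ℝ) - 1)) := by
        rw [← Real.exp_nat_mul]
        congr 1
        rw [Nat.cast_sub hn, Nat.cast_one]
        ring
  calc Real.sqrt n * ((6:ℝ) ^ (Real.log n / 6) * (1 - 5*p/6) ^ (n-1))
      ≤ Real.exp (Real.log n * (1/2)) * (Real.exp (Real.log 6 * (Real.log n / 6))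
          * Real.exp (-(5*p/6) * ((n:ℝ) - 1))) := by
        rw [h1, h2]
        exact mul_le_mul_of_nonneg_left
          (mul_le_mul_of_nonneg_left h3 (Real.exp_nonneg _)) (Real.exp_nonneg _)
    _ = Real.exp (Real.log n * (1/2) + Real.log 6 * (Real.log n / 6)
          + (-(5*p/6) * ((n:ℝ) - 1))) := by
        rw [← Real.exp_add, ← Real.exp_add, add_assoc]
    _ ≤ Real.exp (5/6 - 5/6 * ((n:ℝ) * p - Real.log n)) := by
        apply Real.exp_le_exp.2
        have h6 := log_six_lt_two
        nlinarith [mul_nonneg hL (le_of_lt (sub_pos.2 h6))]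


theorem aas_few_small_vertices (p : ℕ → ℝ) (hp0 : ∀ n, 0 ≤ p n) (hp1 : ∀ n, p n ≤ 1)
    (hlow : Filter.Tendsto (fun n : ℕ => (n : ℝ) * p n - Real.log n) Filter.atTop Filter.atTop)
    (hhigh : ∀ᶠ n : ℕ in Filter.atTop, p n ≤ 1.1 * Real.log n / n) :
    Filter.Tendsto
      (fun n : ℕ => grProb n (p n) fun G =>
        (((Finset.univ.filter fun v => (G.degree v : ℝ) ≤ Real.log n / 6).card : ℝ))
          ≤ Real.sqrt n)
      Filter.atTop (nhds 1) := by
  set f : ℕ → ℝ := fun n => grProb n (p n) fun G =>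
        (((Finset.univ.filter fun v => (G.degree v : ℝ) ≤ Real.log n / 6).card : ℝ))
          ≤ Real.sqrt n with hf
  have hub : ∀ n, f n ≤ 1 := by
    intro n
    calc f n ≤ ∑ G : SimpleGraph (Fin n),
          (p n) ^ edgeCount G * (1 - p n) ^ (n.choose 2 - edgeCount G) := by
          refine Finset.sum_le_sum fun G _ => ?_
          split_ifs
          · exact le_refl _
          · exact mul_nonneg (pow_nonneg (hp0 n) _) (pow_nonneg (by linarith [hp1 n]) _)
      _ = 1 := total_mass n (p n)
  have hlb : ∀ᶠ n in atTop,
      1 - f n ≤ Real.exp (5/6 - 5/6 * ((n:ℝ) * p n - Real.log n)) := by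
    filter_upwards [eventually_ge_atTop 1] with n hn
    exact le_trans (main_bound n hn (hp0 n) (hp1 n)) (bound_le_exp n hn (hp0 n) (hp1 n))
  have h0 : Tendsto (fun n : ℕ => Real.exp (5/6 - 5/6 * ((n:ℝ) * p n - Real.log n)))
      atTop (nhds 0) := by
    apply Real.tendsto_exp_atBot.comp
    have h1 : Tendsto (fun n : ℕ => (5/6 : ℝ) * ((n:ℝ) * p n - Real.log n)) atTop atTop :=
      hlow.const_mul_atTop (by norm_num)
    have h2 : Tendsto (fun n : ℕ => -((5/6 : ℝ) * ((n:ℝ) * p n - Real.log n))) atTop atBot :=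
      tendsto_neg_atBot_iff.2 h1
    simpa [sub_eq_add_neg] using tendsto_atBot_add_const_left atTop (5/6 : ℝ) h2
  have hz : Tendsto (fun n => 1 - f n) atTop (nhds 0) := by
    apply tendsto_of_tendsto_of_tendsto_of_le_of_le' tendsto_const_nhds h0
    · exact Filter.Eventually.of_forall fun n => by linarith [hub n]
    · exact hlb
  have hfin : Tendsto (fun n => 1 - (1 - f n)) atTop (nhds (1 - 0)) :=
    (tendsto_const_nhds : Tendsto (fun _ : ℕ => (1:ℝ)) atTop (nhds 1)).sub hz
  simpa using hfin
end

section
/- If (log n + ω(1))/n ≤ p ≤ (1.1 log n)/n, then asymptotically almost surely in G ~ G(n,p) no two vertices of degree at most log n/6 are adjacent or share a common neighbor. -/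
set_option maxHeartbeats 1600000

open scoped Classical
open Filter

namespace NSP

/-! ### Combinatorial layer: weighted sums over powersets -/

variable {α : Type*} [DecidableEq α]

noncomputable def wt (p : ℝ) (A S : Finset α) : ℝ := p ^ S.card * (1 - p) ^ (A.card - S.card)

omit [DecidableEq α] in
lemma wt_nonneg {p : ℝ} (h0 : 0 ≤ p) (h1 : p ≤ 1) (A S : Finset α) : 0 ≤ wt p A S :=
  mul_nonneg (pow_nonneg h0 _) (pow_nonneg (by linarith) _)

lemma sum_wt (p : ℝ) (A : Finset α) : ∑ S ∈ A.powerset, wt p A S = 1 := by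
  have h := Finset.prod_add (fun _ : α => p) (fun _ => 1 - p) A
  simp only [add_sub_cancel, Finset.prod_const, one_pow] at h
  rw [show (1:ℝ) = ∑ t ∈ A.powerset, p ^ t.card * (1-p) ^ (A \ t).card by
    simpa using h]
  refine Finset.sum_congr rfl fun t ht => ?_
  rw [Finset.mem_powerset] at ht
  rw [wt, Finset.card_sdiff_of_subset ht]

lemma sum_wt_one (p : ℝ) (A : Finset α) : ∑ S ∈ A.powerset, wt p A S * 1 = 1 := by
  simp only [mul_one]; exact sum_wt p A

lemma factor2 (p : ℝ) {A B : Finset α} (h : Disjoint A B) (f g : Finset α → ℝ) :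
    ∑ S ∈ (A ∪ B).powerset, wt p (A ∪ B) S * (f (S ∩ A) * g (S ∩ B)) =
    (∑ S ∈ A.powerset, wt p A S * f S) * (∑ S ∈ B.powerset, wt p B S * g S) := by
  rw [Finset.sum_mul_sum, ← Finset.sum_product']
  refine Finset.sum_nbij' (fun S => (S ∩ A, S ∩ B)) (fun T => T.1 ∪ T.2) ?_ ?_ ?_ ?_ ?_
  · intro S hS
    simp only [Finset.mem_product, Finset.mem_powerset]
    exact ⟨Finset.inter_subset_right, Finset.inter_subset_right⟩
  · intro T hT
    simp only [Finset.mem_product, Finset.mem_powerset] at hT ⊢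
    exact Finset.union_subset_union hT.1 hT.2
  · intro S hS
    rw [Finset.mem_powerset] at hS
    show S ∩ A ∪ S ∩ B = S
    rw [← Finset.inter_union_distrib_left, Finset.inter_eq_left.2 hS]
  · intro T hT
    simp only [Finset.mem_product, Finset.mem_powerset] at hT
    show ((T.1 ∪ T.2) ∩ A, (T.1 ∪ T.2) ∩ B) = T
    rw [Finset.union_inter_distrib_right, Finset.union_inter_distrib_right,
      Finset.inter_eq_left.2 hT.1, Finset.inter_eq_left.2 hT.2,
      Finset.disjoint_iff_inter_eq_empty.1 (h.symm.mono_left hT.2),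
      Finset.disjoint_iff_inter_eq_empty.1 (h.mono_left hT.1),
      Finset.union_empty, Finset.empty_union]
  · intro S hS
    rw [Finset.mem_powerset] at hS
    have hSA : S ∩ A ⊆ A := Finset.inter_subset_right
    have hSB : S ∩ B ⊆ B := Finset.inter_subset_right
    have hcard : (S ∩ A).card + (S ∩ B).card = S.card := by
      rw [← Finset.card_union_of_disjoint (h.mono hSA hSB),
        ← Finset.inter_union_distrib_left, Finset.inter_eq_left.2 hS]
    have hAB : (A ∪ B).card = A.card + B.card := Finset.card_union_of_disjoint h
    have h1 : (S ∩ A).card ≤ A.card := Finset.card_le_card hSA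
    have h2 : (S ∩ B).card ≤ B.card := Finset.card_le_card hSB
    simp only [wt]
    rw [show (A ∪ B).card - S.card = (A.card - (S ∩ A).card) + (B.card - (S ∩ B).card) by omega,
      ← hcard, pow_add, pow_add]
    ring

lemma factor3 (p : ℝ) {A B C : Finset α} (hAB : Disjoint A B) (hAC : Disjoint A C)
    (hBC : Disjoint B C) (f g h : Finset α → ℝ) :
    ∑ S ∈ (A ∪ (B ∪ C)).powerset, wt p (A ∪ (B ∪ C)) S * (f (S ∩ A) * (g (S ∩ B) * h (S ∩ C))) =
    (∑ S ∈ A.powerset, wt p A S * f S) * ((∑ S ∈ B.powerset, wt p B S * g S) *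
      (∑ S ∈ C.powerset, wt p C S * h S)) := by
  rw [← factor2 p hBC g h]
  rw [← factor2 p (Finset.disjoint_union_right.2 ⟨hAB, hAC⟩) f
      (fun T => g (T ∩ B) * h (T ∩ C))]
  refine Finset.sum_congr rfl fun S _ => ?_
  rw [Finset.inter_assoc, Finset.union_inter_cancel_left,
    Finset.inter_assoc, Finset.union_inter_cancel_right]

lemma factor4 (p : ℝ) {A B C D : Finset α} (hAB : Disjoint A B) (hAC : Disjoint A C)
    (hAD : Disjoint A D) (hBC : Disjoint B C) (hBD : Disjoint B D) (hCD : Disjoint C D)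
    (f g h k : Finset α → ℝ) :
    ∑ S ∈ (A ∪ (B ∪ (C ∪ D))).powerset, wt p (A ∪ (B ∪ (C ∪ D))) S *
        (f (S ∩ A) * (g (S ∩ B) * (h (S ∩ C) * k (S ∩ D)))) =
    (∑ S ∈ A.powerset, wt p A S * f S) * ((∑ S ∈ B.powerset, wt p B S * g S) *
      ((∑ S ∈ C.powerset, wt p C S * h S) * (∑ S ∈ D.powerset, wt p D S * k S))) := by
  rw [← factor3 p hBC hBD hCD g h k]
  rw [← factor2 p (Finset.disjoint_union_right.2
      ⟨hAB, Finset.disjoint_union_right.2 ⟨hAC, hAD⟩⟩) f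
      (fun T => g (T ∩ B) * (h (T ∩ C) * k (T ∩ D)))]
  refine Finset.sum_congr rfl fun S _ => ?_
  have h1 : S ∩ (B ∪ (C ∪ D)) ∩ B = S ∩ B := by
    rw [Finset.inter_assoc, Finset.union_inter_cancel_left]
  have h2 : S ∩ (B ∪ (C ∪ D)) ∩ C = S ∩ C := by
    rw [Finset.inter_assoc, show (B ∪ (C ∪ D)) ∩ C = C from
      Finset.inter_eq_right.2 (Finset.subset_union_left.trans Finset.subset_union_right)]
  have h3 : S ∩ (B ∪ (C ∪ D)) ∩ D = S ∩ D := by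
    rw [Finset.inter_assoc, show (B ∪ (C ∪ D)) ∩ D = D from
      Finset.inter_eq_right.2 (Finset.subset_union_right.trans Finset.subset_union_right)]
  rw [h1, h2, h3]

lemma factor5 (p : ℝ) {A B C D E : Finset α} (hAB : Disjoint A B) (hAC : Disjoint A C)
    (hAD : Disjoint A D) (hAE : Disjoint A E) (hBC : Disjoint B C) (hBD : Disjoint B D)
    (hBE : Disjoint B E) (hCD : Disjoint C D) (hCE : Disjoint C E) (hDE : Disjoint D E)
    (f g h k l : Finset α → ℝ) :
    ∑ S ∈ (A ∪ (B ∪ (C ∪ (D ∪ E)))).powerset, wt p (A ∪ (B ∪ (C ∪ (D ∪ E)))) S *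
        (f (S ∩ A) * (g (S ∩ B) * (h (S ∩ C) * (k (S ∩ D) * l (S ∩ E))))) =
    (∑ S ∈ A.powerset, wt p A S * f S) * ((∑ S ∈ B.powerset, wt p B S * g S) *
      ((∑ S ∈ C.powerset, wt p C S * h S) * ((∑ S ∈ D.powerset, wt p D S * k S) *
        (∑ S ∈ E.powerset, wt p E S * l S)))) := by
  rw [← factor4 p hBC hBD hBE hCD hCE hDE g h k l]
  rw [← factor2 p (Finset.disjoint_union_right.2
      ⟨hAB, Finset.disjoint_union_right.2 ⟨hAC,
        Finset.disjoint_union_right.2 ⟨hAD, hAE⟩⟩⟩) f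
      (fun T => g (T ∩ B) * (h (T ∩ C) * (k (T ∩ D) * l (T ∩ E))))]
  refine Finset.sum_congr rfl fun S _ => ?_
  have hB : S ∩ (B ∪ (C ∪ (D ∪ E))) ∩ B = S ∩ B := by
    rw [Finset.inter_assoc, Finset.union_inter_cancel_left]
  have hC : S ∩ (B ∪ (C ∪ (D ∪ E))) ∩ C = S ∩ C := by
    rw [Finset.inter_assoc, show (B ∪ (C ∪ (D ∪ E))) ∩ C = C from
      Finset.inter_eq_right.2 (Finset.subset_union_left.trans Finset.subset_union_right)]
  have hD : S ∩ (B ∪ (C ∪ (D ∪ E))) ∩ D = S ∩ D := by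
    rw [Finset.inter_assoc, show (B ∪ (C ∪ (D ∪ E))) ∩ D = D from
      Finset.inter_eq_right.2 ((Finset.subset_union_left.trans
        Finset.subset_union_right).trans Finset.subset_union_right)]
  have hE : S ∩ (B ∪ (C ∪ (D ∪ E))) ∩ E = S ∩ E := by
    rw [Finset.inter_assoc, show (B ∪ (C ∪ (D ∪ E))) ∩ E = E from
      Finset.inter_eq_right.2 ((Finset.subset_union_right.trans
        Finset.subset_union_right).trans Finset.subset_union_right)]
  rw [hB, hC, hD, hE]

lemma sum_wt_mem (p : ℝ) (e : α) :
    ∑ S ∈ ({e} : Finset α).powerset, wt p {e} S * (if e ∈ S then 1 else 0) = p := by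
  rw [show ({e} : Finset α) = insert e ∅ from rfl, Finset.powerset_insert]
  simp [wt, Finset.sum_union]

noncomputable def tail (m : ℕ) (p : ℝ) (d : ℕ) : ℝ :=
  ∑ k ∈ Finset.range (d+1), (m.choose k : ℝ) * (p ^ k * (1-p) ^ (m-k))

omit [DecidableEq α] in
lemma sum_wt_card_le (p : ℝ) (B : Finset α) (d : ℕ) :
    ∑ S ∈ B.powerset, wt p B S * (if S.card ≤ d then 1 else 0) = tail B.card p d := by
  have hfun : (fun S : Finset α => wt p B S * (if S.card ≤ d then 1 else 0)) =
      fun S => (fun k => p ^ k * (1-p) ^ (B.card - k) * (if k ≤ d then 1 else 0)) S.card := rfl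
  have hap := Finset.sum_powerset_apply_card
    (f := fun k => p ^ k * (1-p) ^ (B.card - k) * (if k ≤ d then 1 else 0)) (x := B)
  rw [hfun, hap]
  simp only [nsmul_eq_mul]
  rw [show ∑ m ∈ Finset.range (B.card+1), (B.card.choose m : ℝ) *
      (p ^ m * (1-p) ^ (B.card - m) * (if m ≤ d then 1 else 0)) =
      ∑ m ∈ Finset.range (B.card + d + 1), (B.card.choose m : ℝ) *
      (p ^ m * (1-p) ^ (B.card - m) * (if m ≤ d then 1 else 0)) from
    Finset.sum_subset (Finset.range_subset_range.2 (by omega)) (fun x _ hx => by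
      rw [Finset.mem_range, not_lt] at hx
      rw [Nat.choose_eq_zero_of_lt (by omega)]
      simp)]
  have h2 : tail B.card p d = ∑ k ∈ Finset.range (d+1), (B.card.choose k : ℝ) *
      (p ^ k * (1-p) ^ (B.card - k) * (if k ≤ d then 1 else 0)) :=
    Finset.sum_congr rfl fun k hk => by
      rw [if_pos (by simpa [Nat.lt_succ_iff] using hk), mul_one]
  rw [h2]
  exact (Finset.sum_subset (Finset.range_subset_range.2 (by omega)) (fun x _ hx => by
      rw [Finset.mem_range, not_lt] at hx
      rw [if_neg (by omega)]
      simp)).symm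

/-! ### Graph layer -/

variable {n : ℕ}

noncomputable def allE (n : ℕ) : Finset (Sym2 (Fin n)) := (⊤ : SimpleGraph (Fin n)).edgeFinset

lemma card_allE (n : ℕ) : (allE n).card = n.choose 2 := by
  rw [allE, SimpleGraph.card_edgeFinset_top_eq_card_choose_two, Fintype.card_fin]

lemma not_isDiag_of_mem_allE {e : Sym2 (Fin n)} (h : e ∈ allE n) : ¬ e.IsDiag :=
  SimpleGraph.not_isDiag_of_mem_edgeSet _ (SimpleGraph.mem_edgeFinset.1 h)

lemma mem_allE {a b : Fin n} (h : a ≠ b) : s(a, b) ∈ allE n := by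
  rw [allE, SimpleGraph.mem_edgeFinset, SimpleGraph.mem_edgeSet]
  exact h

lemma edgeFinset_fromEdgeSet {S : Finset (Sym2 (Fin n))} (hS : S ∈ (allE n).powerset) :
    (SimpleGraph.fromEdgeSet (S : Set (Sym2 (Fin n)))).edgeFinset = S := by
  rw [Finset.mem_powerset] at hS
  have h1 : (SimpleGraph.fromEdgeSet (S : Set (Sym2 (Fin n)))).edgeSet = S := by
    rw [SimpleGraph.edgeSet_fromEdgeSet]
    ext e
    simp only [Set.mem_diff, Finset.mem_coe, Set.mem_setOf_eq]
    exact ⟨fun h => h.1, fun h => ⟨h, not_isDiag_of_mem_allE (hS h)⟩⟩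
  apply Finset.coe_injective
  rw [SimpleGraph.coe_edgeFinset, h1]

lemma grProb_eq_sum (n : ℕ) (p : ℝ) (Q : SimpleGraph (Fin n) → Prop) :
    grProb n p Q = ∑ S ∈ (allE n).powerset,
      wt p (allE n) S * (if Q (SimpleGraph.fromEdgeSet (S : Set (Sym2 (Fin n)))) then 1 else 0) := by
  rw [grProb]
  refine Finset.sum_nbij' (fun G => G.edgeFinset)
    (fun S => SimpleGraph.fromEdgeSet (S : Set (Sym2 (Fin n)))) ?_ ?_ ?_ ?_ ?_
  · intro G _
    exact Finset.mem_powerset.2 (SimpleGraph.edgeFinset_mono le_top)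
  · intro S _; exact Finset.mem_univ _
  · intro G _
    simp only [SimpleGraph.coe_edgeFinset, SimpleGraph.fromEdgeSet_edgeSet]
  · intro S hS
    convert edgeFinset_fromEdgeSet hS using 2
  · intro G _
    rw [wt, card_allE]
    simp only [SimpleGraph.coe_edgeFinset, SimpleGraph.fromEdgeSet_edgeSet, edgeCount]
    by_cases h : Q G <;> simp [h]

lemma grProb_nonneg {p : ℝ} (h0 : 0 ≤ p) (h1 : p ≤ 1) (Q : SimpleGraph (Fin n) → Prop) :
    0 ≤ grProb n p Q := by
  refine Finset.sum_nonneg fun G _ => ?_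
  by_cases h : Q G <;> simp [h, mul_nonneg, pow_nonneg, h0, sub_nonneg.2 h1]

lemma grProb_mono {p : ℝ} (h0 : 0 ≤ p) (h1 : p ≤ 1)
    {Q R : SimpleGraph (Fin n) → Prop} (h : ∀ G, Q G → R G) :
    grProb n p Q ≤ grProb n p R := by
  refine Finset.sum_le_sum fun G _ => ?_
  by_cases hq : Q G
  · rw [if_pos hq, if_pos (h G hq)]
  · rw [if_neg hq]
    by_cases hr : R G <;>
      simp [hr, mul_nonneg, pow_nonneg, h0, sub_nonneg.2 h1]

lemma grProb_true (n : ℕ) (p : ℝ) : grProb n p (fun _ => True) = 1 := by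
  rw [grProb_eq_sum]
  simp only [if_pos trivial]
  exact sum_wt_one p (allE n)

lemma grProb_compl (n : ℕ) {p : ℝ} (Q : SimpleGraph (Fin n) → Prop) :
    grProb n p Q = 1 - grProb n p (fun G => ¬ Q G) := by
  rw [eq_sub_iff_add_eq, ← grProb_true n p, grProb, grProb, grProb, ← Finset.sum_add_distrib]
  refine Finset.sum_congr rfl fun G _ => ?_
  by_cases h : Q G <;> simp [h]

lemma grProb_false (n : ℕ) (p : ℝ) {Q : SimpleGraph (Fin n) → Prop}
    (h : ∀ G, ¬ Q G) : grProb n p Q = 0 := by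
  rw [grProb]
  exact Finset.sum_eq_zero fun G _ => by rw [if_neg (h G)]

lemma grProb_union_le {p : ℝ} (h0 : 0 ≤ p) (h1 : p ≤ 1)
    {β : Type*} (s : Finset β) (R : β → SimpleGraph (Fin n) → Prop) :
    grProb n p (fun G => ∃ b ∈ s, R b G) ≤ ∑ b ∈ s, grProb n p (R b) := by
  have hw : ∀ G : SimpleGraph (Fin n), 0 ≤ p ^ edgeCount G * (1 - p) ^ (n.choose 2 - edgeCount G) :=
    fun G => mul_nonneg (pow_nonneg h0 _) (pow_nonneg (by linarith) _)
  simp only [grProb]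
  refine le_trans (Finset.sum_le_sum fun G _ => ?_) (le_of_eq Finset.sum_comm)
  by_cases h : ∃ b ∈ s, R b G
  · rw [if_pos h]
    obtain ⟨b, hb, hR⟩ := h
    refine le_trans (le_of_eq (if_pos hR).symm)
      (Finset.single_le_sum (f := fun c => if R c G then
        p ^ edgeCount G * (1 - p) ^ (n.choose 2 - edgeCount G) else 0) (fun c _ => ?_) hb)
    by_cases hc : R c G <;> simp [hc, hw G]
  · rw [if_neg h]
    refine Finset.sum_nonneg fun c _ => ?_
    by_cases hc : R c G <;> simp [hc, hw G]

/-! ### B-sets -/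

noncomputable def Bset (u : Fin n) (excl : Finset (Fin n)) : Finset (Sym2 (Fin n)) :=
  (Finset.univ \ insert u excl).image fun x => s(u, x)

lemma card_Bset (u : Fin n) (excl : Finset (Fin n)) :
    (Bset u excl).card = n - (insert u excl).card := by
  rw [Bset, Finset.card_image_of_injective _ (fun x y h => Sym2.congr_right.1 h),
    Finset.card_sdiff_of_subset (Finset.subset_univ _), Finset.card_univ, Fintype.card_fin]

lemma mem_Bset {u : Fin n} {excl : Finset (Fin n)} {e : Sym2 (Fin n)} (he : e ∈ Bset u excl) :
    u ∈ e ∧ (∀ v ∈ excl, v ≠ u → v ∉ e) ∧ e ∈ allE n := by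
  rw [Bset, Finset.mem_image] at he
  obtain ⟨x, hx, rfl⟩ := he
  rw [Finset.mem_sdiff, Finset.mem_insert] at hx
  push_neg at hx
  refine ⟨Sym2.mem_mk_left _ _, fun v hv hvu hmem => ?_, mem_allE (fun h => hx.2.1 h.symm)⟩
  rw [Sym2.mem_iff] at hmem
  rcases hmem with h | h
  · exact hvu h
  · exact hx.2.2 (h ▸ hv)

lemma Bset_subset_allE (u : Fin n) (excl : Finset (Fin n)) : Bset u excl ⊆ allE n :=
  fun _ he => (mem_Bset he).2.2

lemma card_inter_Bset_le_degree {S : Finset (Sym2 (Fin n))} (hS : S ⊆ allE n)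
    (u : Fin n) (excl : Finset (Fin n)) :
    (S ∩ Bset u excl).card ≤ (SimpleGraph.fromEdgeSet (S : Set (Sym2 (Fin n)))).degree u := by
  set G := SimpleGraph.fromEdgeSet (S : Set (Sym2 (Fin n)))
  have hsub : S ∩ Bset u excl ⊆ G.incidenceFinset u := by
    intro e he
    rw [Finset.mem_inter] at he
    rw [SimpleGraph.mem_incidenceFinset]
    refine ⟨?_, (mem_Bset he.2).1⟩
    rw [SimpleGraph.edgeSet_fromEdgeSet]
    exact ⟨he.1, not_isDiag_of_mem_allE (hS he.1)⟩
  calc (S ∩ Bset u excl).card ≤ (G.incidenceFinset u).card := Finset.card_le_card hsub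
    _ = G.degree u := SimpleGraph.card_incidenceFinset_eq_degree _ _

/-! ### The two estimates -/

lemma est_adj (p : ℝ) (h0 : 0 ≤ p) (h1 : p ≤ 1) (d : ℕ) {u v : Fin n} (huv : u ≠ v) :
    grProb n p (fun G => G.degree u ≤ d ∧ G.degree v ≤ d ∧ G.Adj u v)
      ≤ p * (tail (n - 2) p d * tail (n - 2) p d) := by
  classical
  set E1 : Finset (Sym2 (Fin n)) := {s(u, v)} with hE1def
  set Bu := Bset u {v} with hBudef
  set Bv := Bset v {u} with hBvdef
  have hE1sub : E1 ⊆ allE n := by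
    intro e he
    rw [hE1def, Finset.mem_singleton] at he
    exact he ▸ mem_allE huv
  have hsub : E1 ∪ Bu ∪ Bv ⊆ allE n :=
    Finset.union_subset (Finset.union_subset hE1sub (Bset_subset_allE u {v}))
      (Bset_subset_allE v {u})
  set R := allE n \ (E1 ∪ Bu ∪ Bv) with hRdef
  have hUnion : allE n = E1 ∪ (Bu ∪ (Bv ∪ R)) := by
    rw [hRdef, ← Finset.union_assoc, ← Finset.union_assoc, Finset.union_sdiff_of_subset hsub]
  -- disjointness
  have dE1Bu : Disjoint E1 Bu := Finset.disjoint_left.2 fun e he1 heB => by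
    rw [hE1def, Finset.mem_singleton] at he1
    exact (mem_Bset heB).2.1 v (Finset.mem_singleton_self v) (Ne.symm huv)
      (he1 ▸ Sym2.mem_mk_right u v)
  have dE1Bv : Disjoint E1 Bv := Finset.disjoint_left.2 fun e he1 heB => by
    rw [hE1def, Finset.mem_singleton] at he1
    exact (mem_Bset heB).2.1 u (Finset.mem_singleton_self u) huv
      (he1 ▸ Sym2.mem_mk_left u v)
  have dBuBv : Disjoint Bu Bv := Finset.disjoint_left.2 fun e heu hev =>
    (mem_Bset heu).2.1 v (Finset.mem_singleton_self v) (Ne.symm huv) (mem_Bset hev).1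
  have dR : Disjoint (E1 ∪ Bu ∪ Bv) R := Finset.disjoint_sdiff
  have dE1R : Disjoint E1 R := dR.mono_left (by intro x hx; simp only [Finset.mem_union]; tauto)
  have dBuR : Disjoint Bu R := dR.mono_left (by intro x hx; simp only [Finset.mem_union]; tauto)
  have dBvR : Disjoint Bv R := dR.mono_left Finset.subset_union_right
  have hcard : Bu.card = n - 2 := by
    rw [hBudef, card_Bset, Finset.card_insert_of_notMem (Finset.notMem_singleton.2 huv),
      Finset.card_singleton]
  have hcard' : Bv.card = n - 2 := by
    rw [hBvdef, card_Bset, Finset.card_insert_of_notMem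
      (Finset.notMem_singleton.2 (Ne.symm huv)), Finset.card_singleton]
  have hEq : ∑ S ∈ (allE n).powerset, wt p (allE n) S *
      ((if s(u,v) ∈ S ∩ E1 then 1 else 0) * ((if (S ∩ Bu).card ≤ d then 1 else 0) *
        ((if (S ∩ Bv).card ≤ d then 1 else 0) * (1 : ℝ)))) =
      p * (tail Bu.card p d * (tail Bv.card p d * 1)) := by
    conv_lhs => rw [hUnion]
    rw [factor4 p dE1Bu dE1Bv dE1R dBuBv dBuR dBvR
      (fun T => if s(u,v) ∈ T then 1 else 0) (fun T => if T.card ≤ d then 1 else 0)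
      (fun T => if T.card ≤ d then 1 else 0) (fun _ => (1:ℝ))]
    rw [hE1def, sum_wt_mem, sum_wt_card_le, sum_wt_card_le, sum_wt_one]
  have hfinal : p * (tail Bu.card p d * (tail Bv.card p d * 1)) ≤
      p * (tail (n - 2) p d * tail (n - 2) p d) := by
    rw [hcard, hcard', mul_one]
  rw [grProb_eq_sum]
  refine le_trans (Finset.sum_le_sum fun S hS => ?_) (hEq.le.trans hfinal)
  rw [Finset.mem_powerset] at hS
  · 
    refine mul_le_mul_of_nonneg_left ?_ (wt_nonneg h0 h1 _ _)
    by_cases hQ : (SimpleGraph.fromEdgeSet (S : Set (Sym2 (Fin n)))).degree u ≤ d ∧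
        (SimpleGraph.fromEdgeSet (S : Set (Sym2 (Fin n)))).degree v ≤ d ∧
        (SimpleGraph.fromEdgeSet (S : Set (Sym2 (Fin n)))).Adj u v
    · obtain ⟨hdu, hdv, hadj⟩ := hQ
      have h1' : s(u,v) ∈ S ∩ E1 := Finset.mem_inter.2
        ⟨((SimpleGraph.fromEdgeSet_adj _).1 hadj).1, Finset.mem_singleton_self _⟩
      have h2' : (S ∩ Bu).card ≤ d := le_trans (card_inter_Bset_le_degree hS u {v}) hdu
      have h3' : (S ∩ Bv).card ≤ d := le_trans (card_inter_Bset_le_degree hS v {u}) hdv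
      rw [if_pos h1', if_pos h2', if_pos h3']
      split <;> norm_num
    · refine le_trans (le_of_eq (if_neg ?_)) ?_
      · convert hQ
      have : ∀ P : Prop, ∀ inst : Decidable P, (0:ℝ) ≤ if P then 1 else 0 :=
        fun P inst => by split <;> norm_num
      exact mul_nonneg (this _ _) (mul_nonneg (this _ _) (mul_nonneg (this _ _) zero_le_one))

lemma est_cn (p : ℝ) (h0 : 0 ≤ p) (h1 : p ≤ 1) (d : ℕ) {u v w : Fin n}
    (huv : u ≠ v) (huw : u ≠ w) (hvw : v ≠ w) :
    grProb n p (fun G => G.degree u ≤ d ∧ G.degree v ≤ d ∧ G.Adj u w ∧ G.Adj v w)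
      ≤ p * (p * (tail (n - 3) p d * tail (n - 3) p d)) := by
  classical
  set E1 : Finset (Sym2 (Fin n)) := {s(u, w)} with hE1def
  set E2 : Finset (Sym2 (Fin n)) := {s(v, w)} with hE2def
  set Bu := Bset u {v, w} with hBudef
  set Bv := Bset v {u, w} with hBvdef
  have hE1sub : E1 ⊆ allE n := by
    intro e he; rw [hE1def, Finset.mem_singleton] at he
    exact he ▸ mem_allE huw
  have hE2sub : E2 ⊆ allE n := by
    intro e he; rw [hE2def, Finset.mem_singleton] at he
    exact he ▸ mem_allE hvw
  have hsub : E1 ∪ E2 ∪ Bu ∪ Bv ⊆ allE n :=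
    Finset.union_subset (Finset.union_subset (Finset.union_subset hE1sub hE2sub)
      (Bset_subset_allE u {v, w})) (Bset_subset_allE v {u, w})
  set R := allE n \ (E1 ∪ E2 ∪ Bu ∪ Bv) with hRdef
  have hUnion : allE n = E1 ∪ (E2 ∪ (Bu ∪ (Bv ∪ R))) := by
    rw [hRdef, ← Finset.union_assoc, ← Finset.union_assoc, ← Finset.union_assoc,
      Finset.union_sdiff_of_subset hsub]
  have memBu : ∀ e ∈ Bu, v ∉ e ∧ w ∉ e := fun e he => by
    have h := mem_Bset (hBudef ▸ he)
    exact ⟨h.2.1 v (by simp) (Ne.symm huv), h.2.1 w (by simp) (Ne.symm huw)⟩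
  have memBv : ∀ e ∈ Bv, u ∉ e ∧ w ∉ e := fun e he => by
    have h := mem_Bset (hBvdef ▸ he)
    exact ⟨h.2.1 u (by simp) huv, h.2.1 w (by simp) (Ne.symm hvw)⟩
  have dE1E2 : Disjoint E1 E2 := by
    rw [hE1def, hE2def, Finset.disjoint_singleton]
    intro h
    exact huv (Sym2.congr_left.1 h)
  have dE1Bu : Disjoint E1 Bu := Finset.disjoint_left.2 fun e he1 heB => by
    rw [hE1def, Finset.mem_singleton] at he1
    exact (memBu e heB).2 (he1 ▸ Sym2.mem_mk_right u w)
  have dE1Bv : Disjoint E1 Bv := Finset.disjoint_left.2 fun e he1 heB => by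
    rw [hE1def, Finset.mem_singleton] at he1
    exact (memBv e heB).1 (he1 ▸ Sym2.mem_mk_left u w)
  have dE2Bu : Disjoint E2 Bu := Finset.disjoint_left.2 fun e he1 heB => by
    rw [hE2def, Finset.mem_singleton] at he1
    exact (memBu e heB).1 (he1 ▸ Sym2.mem_mk_left v w)
  have dE2Bv : Disjoint E2 Bv := Finset.disjoint_left.2 fun e he1 heB => by
    rw [hE2def, Finset.mem_singleton] at he1
    exact (memBv e heB).2 (he1 ▸ Sym2.mem_mk_right v w)
  have dBuBv : Disjoint Bu Bv := Finset.disjoint_left.2 fun e heu hev =>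
    (memBu e heu).1 (mem_Bset (hBvdef ▸ hev)).1
  have dR : Disjoint (E1 ∪ E2 ∪ Bu ∪ Bv) R := Finset.disjoint_sdiff
  have dE1R : Disjoint E1 R := dR.mono_left (by intro x hx; simp only [Finset.mem_union]; tauto)
  have dE2R : Disjoint E2 R := dR.mono_left (by intro x hx; simp only [Finset.mem_union]; tauto)
  have dBuR : Disjoint Bu R := dR.mono_left (by intro x hx; simp only [Finset.mem_union]; tauto)
  have dBvR : Disjoint Bv R := dR.mono_left (by intro x hx; simp only [Finset.mem_union]; tauto)
  have hc2 : ({v, w} : Finset (Fin n)).card = 2 := by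
    rw [Finset.card_insert_of_notMem (Finset.notMem_singleton.2 hvw), Finset.card_singleton]
  have hc2' : ({u, w} : Finset (Fin n)).card = 2 := by
    rw [Finset.card_insert_of_notMem (Finset.notMem_singleton.2 huw), Finset.card_singleton]
  have hcard : Bu.card = n - 3 := by
    rw [hBudef, card_Bset, Finset.card_insert_of_notMem (by simp [huv, huw]), hc2]
  have hcard' : Bv.card = n - 3 := by
    rw [hBvdef, card_Bset, Finset.card_insert_of_notMem (by simp [Ne.symm huv, hvw]), hc2']
  have hEq : ∑ S ∈ (allE n).powerset, wt p (allE n) S *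
      ((if s(u,w) ∈ S ∩ E1 then 1 else 0) * ((if s(v,w) ∈ S ∩ E2 then 1 else 0) *
        ((if (S ∩ Bu).card ≤ d then 1 else 0) *
          ((if (S ∩ Bv).card ≤ d then 1 else 0) * (1 : ℝ))))) =
      p * (p * (tail Bu.card p d * (tail Bv.card p d * 1))) := by
    conv_lhs => rw [hUnion]
    rw [factor5 p dE1E2 dE1Bu dE1Bv dE1R dE2Bu dE2Bv dE2R dBuBv dBuR dBvR
      (fun T => if s(u,w) ∈ T then 1 else 0) (fun T => if s(v,w) ∈ T then 1 else 0)
      (fun T => if T.card ≤ d then 1 else 0) (fun T => if T.card ≤ d then 1 else 0)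
      (fun _ => (1:ℝ))]
    rw [hE1def, hE2def, sum_wt_mem, sum_wt_mem, sum_wt_card_le, sum_wt_card_le, sum_wt_one]
  have hfinal : p * (p * (tail Bu.card p d * (tail Bv.card p d * 1))) ≤
      p * (p * (tail (n - 3) p d * tail (n - 3) p d)) := by
    rw [hcard, hcard', mul_one]
  rw [grProb_eq_sum]
  refine le_trans (Finset.sum_le_sum fun S hS => ?_) (hEq.le.trans hfinal)
  rw [Finset.mem_powerset] at hS
  · 
    refine mul_le_mul_of_nonneg_left ?_ (wt_nonneg h0 h1 _ _)
    have hnn : ∀ P : Prop, ∀ inst : Decidable P, (0:ℝ) ≤ if P then 1 else 0 :=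
      fun P inst => by split <;> norm_num
    by_cases hQ : (SimpleGraph.fromEdgeSet (S : Set (Sym2 (Fin n)))).degree u ≤ d ∧
        (SimpleGraph.fromEdgeSet (S : Set (Sym2 (Fin n)))).degree v ≤ d ∧
        (SimpleGraph.fromEdgeSet (S : Set (Sym2 (Fin n)))).Adj u w ∧
        (SimpleGraph.fromEdgeSet (S : Set (Sym2 (Fin n)))).Adj v w
    · obtain ⟨hdu, hdv, hadj1, hadj2⟩ := hQ
      have h1' : s(u,w) ∈ S ∩ E1 := Finset.mem_inter.2
        ⟨((SimpleGraph.fromEdgeSet_adj _).1 hadj1).1, Finset.mem_singleton_self _⟩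
      have h2' : s(v,w) ∈ S ∩ E2 := Finset.mem_inter.2
        ⟨((SimpleGraph.fromEdgeSet_adj _).1 hadj2).1, Finset.mem_singleton_self _⟩
      have h3' : (S ∩ Bu).card ≤ d := le_trans (card_inter_Bset_le_degree hS u {v, w}) hdu
      have h4' : (S ∩ Bv).card ≤ d := le_trans (card_inter_Bset_le_degree hS v {u, w}) hdv
      rw [if_pos h1', if_pos h2', if_pos h3', if_pos h4']
      split <;> norm_num
    · refine le_trans (le_of_eq (if_neg ?_)) ?_
      · convert hQ
      exact mul_nonneg (hnn _ _) (mul_nonneg (hnn _ _)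
        (mul_nonneg (hnn _ _) (mul_nonneg (hnn _ _) zero_le_one)))






lemma tail_nonneg (m : ℕ) {p : ℝ} (h0 : 0 ≤ p) (h1 : p ≤ 1) (d : ℕ) : 0 ≤ tail m p d :=
  Finset.sum_nonneg fun k _ => mul_nonneg (Nat.cast_nonneg _)
    (mul_nonneg (pow_nonneg h0 _) (pow_nonneg (by linarith) _))

lemma pow_mul_factorial_le {x : ℝ} (hx0 : 0 ≤ x) {k d : ℕ} (hkd : k ≤ d) (hdx : (d:ℝ) ≤ x) :
    x ^ k * (d.factorial : ℝ) ≤ x ^ d * (k.factorial : ℝ) := by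
  induction d with
  | zero =>
    interval_cases k
    simp
  | succ d ih =>
    rcases Nat.lt_succ_iff_lt_or_eq.1 (Nat.lt_succ_of_le hkd) with h | h
    · have hkd' : k ≤ d := Nat.lt_succ_iff.1 h
      have hdx' : (d:ℝ) ≤ x := le_trans (by push_cast; linarith) hdx
      have hd1x : ((d:ℝ)+1) ≤ x := by push_cast at hdx ⊢; linarith
      calc x ^ k * ((d+1).factorial : ℝ) = (x ^ k * (d.factorial : ℝ)) * ((d:ℝ)+1) := by
            rw [Nat.factorial_succ]; push_cast; ring
        _ ≤ (x ^ d * (k.factorial : ℝ)) * ((d:ℝ)+1) := by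
            refine mul_le_mul_of_nonneg_right (ih hkd' hdx') (by positivity)
        _ ≤ (x ^ d * (k.factorial : ℝ)) * x := by
            refine mul_le_mul_of_nonneg_left hd1x (by positivity)
        _ = x ^ (d+1) * (k.factorial : ℝ) := by rw [pow_succ]; ring
    · subst h; exact le_refl _

lemma tail_le (m d : ℕ) {p : ℝ} (hp0 : 0 ≤ p) (hp1 : p ≤ 1) (hmp : (d:ℝ) + 1 ≤ m * p) :
    tail m p d ≤ ((d:ℝ)+1) * (((m:ℝ)*p) ^ d / (d.factorial : ℝ) *
      Real.exp (-((m:ℝ)*p) + p*d)) := by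
  have hq0 : (0:ℝ) ≤ 1 - p := by linarith
  have hdm : (d:ℝ) ≤ m * p := by linarith
  have hBnn : 0 ≤ ((m:ℝ)*p) ^ d / (d.factorial : ℝ) * Real.exp (-((m:ℝ)*p) + p*d) := by
    have : (0:ℝ) ≤ m*p := by linarith
    positivity
  have key : ∀ k ∈ Finset.range (d+1), (m.choose k : ℝ) * (p ^ k * (1-p) ^ (m-k)) ≤
      ((m:ℝ)*p) ^ d / (d.factorial : ℝ) * Real.exp (-((m:ℝ)*p) + p*d) := by
    intro k hk
    rw [Finset.mem_range, Nat.lt_succ_iff] at hk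
    by_cases hkm : k ≤ m
    · have h1 : (m.choose k : ℝ) ≤ (m:ℝ) ^ k / (k.factorial : ℝ) := Nat.choose_le_pow_div k m
      have h2 : (1-p) ^ (m-k) ≤ Real.exp (-((m:ℝ)*p) + p*d) := by
        have h2a : (1-p) ^ (m-k) ≤ Real.exp (-p) ^ (m-k) := by
          refine pow_le_pow_left₀ hq0 ?_ _
          linarith [Real.add_one_le_exp (-p)]
        refine h2a.trans ?_
        rw [← Real.exp_nat_mul]
        refine Real.exp_le_exp.2 ?_
        have hc : ((m - k : ℕ) : ℝ) = (m:ℝ) - k := by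
          push_cast [Nat.cast_sub hkm]; ring
        rw [hc]
        have hk' : (k:ℝ) ≤ (d:ℝ) := by exact_mod_cast hk
        nlinarith [hp0, mul_le_mul_of_nonneg_left hk' hp0]
      have h3 : ((m:ℝ)*p) ^ k / (k.factorial : ℝ) ≤ ((m:ℝ)*p) ^ d / (d.factorial : ℝ) := by
        rw [div_le_div_iff₀ (by positivity) (by positivity)]
        exact pow_mul_factorial_le (by linarith) hk hdm
      have hnn1 : (0:ℝ) ≤ p ^ k := pow_nonneg hp0 _
      have hnn2 : (0:ℝ) ≤ (1-p) ^ (m-k) := pow_nonneg hq0 _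
      have hnn3 : (0:ℝ) ≤ (m:ℝ) ^ k / (k.factorial : ℝ) := by positivity
      calc (m.choose k : ℝ) * (p ^ k * (1-p) ^ (m-k))
          ≤ ((m:ℝ) ^ k / (k.factorial : ℝ)) * (p ^ k * (1-p) ^ (m-k)) := by
            refine mul_le_mul_of_nonneg_right h1 (by positivity)
        _ = (((m:ℝ)*p) ^ k / (k.factorial : ℝ)) * (1-p) ^ (m-k) := by
            rw [mul_pow]; ring
        _ ≤ (((m:ℝ)*p) ^ d / (d.factorial : ℝ)) * (1-p) ^ (m-k) := by
            refine mul_le_mul_of_nonneg_right h3 hnn2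
        _ ≤ (((m:ℝ)*p) ^ d / (d.factorial : ℝ)) * Real.exp (-((m:ℝ)*p) + p*d) := by
            refine mul_le_mul_of_nonneg_left h2 (by positivity)
    · rw [Nat.choose_eq_zero_of_lt (by omega)]
      simpa using hBnn
  calc tail m p d ≤ ∑ _k ∈ Finset.range (d+1),
        ((m:ℝ)*p) ^ d / (d.factorial : ℝ) * Real.exp (-((m:ℝ)*p) + p*d) :=
        Finset.sum_le_sum key
    _ = ((d:ℝ)+1) * (((m:ℝ)*p) ^ d / (d.factorial : ℝ) * Real.exp (-((m:ℝ)*p) + p*d)) := by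
        rw [Finset.sum_const, Finset.card_range, nsmul_eq_mul]; push_cast; ring

lemma pow_div_factorial_le {x : ℝ} {d : ℕ} (hd : 1 ≤ d) (hx : (d:ℝ) ≤ x) :
    x ^ d / (d.factorial : ℝ) ≤ Real.exp ((d:ℝ) * (1 + Real.log (x / d))) := by
  have hd0 : (0:ℝ) < d := by exact_mod_cast hd
  have hx0 : (0:ℝ) < x := lt_of_lt_of_le hd0 hx
  have hxd0 : (0:ℝ) < x / d := by positivity
  have h1 : (d:ℝ) ^ d / (d.factorial : ℝ) ≤ Real.exp (d:ℝ) := by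
    have := Real.sum_le_exp_of_nonneg (le_of_lt hd0) (d+1)
    refine le_trans ?_ this
    exact Finset.single_le_sum (f := fun i => (d:ℝ) ^ i / (i.factorial : ℝ))
      (fun i _ => by positivity) (Finset.self_mem_range_succ d)
  have h2 : x ^ d = (x / d) ^ d * (d:ℝ) ^ d := by
    rw [div_pow, div_mul_cancel₀]
    positivity
  have h3 : (x / d) ^ d = Real.exp ((d:ℝ) * Real.log (x / d)) := by
    rw [← Real.exp_log hxd0, ← Real.exp_nat_mul, Real.exp_log hxd0]
  calc x ^ d / (d.factorial : ℝ) = (x / d) ^ d * ((d:ℝ) ^ d / (d.factorial : ℝ)) := by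
        rw [h2]; ring
    _ ≤ (x / d) ^ d * Real.exp (d:ℝ) := by
        refine mul_le_mul_of_nonneg_left h1 (by positivity)
    _ = Real.exp ((d:ℝ) * Real.log (x / d) + (d:ℝ)) := by
        rw [h3, ← Real.exp_add]
    _ = Real.exp ((d:ℝ) * (1 + Real.log (x / d))) := by ring_nf

lemma numeric_6655 : (6.655 : ℝ) ≤ Real.exp 1.91 := by
  have h1 : Real.exp (1.91 : ℝ) = Real.exp 1 * Real.exp 1 * Real.exp (-0.09) := by
    rw [← Real.exp_add, ← Real.exp_add]; norm_num
  have h2 : (0.91 : ℝ) ≤ Real.exp (-0.09) := by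
    have := Real.add_one_le_exp (-0.09 : ℝ); linarith
  have h3 : (2.7182818283 : ℝ) < Real.exp 1 := Real.exp_one_gt_d9
  have h4 : (0:ℝ) < Real.exp 1 := Real.exp_pos 1
  rw [h1]
  nlinarith

lemma exp_two_le : Real.exp 2 ≤ 7.4 := by
  have h1 : Real.exp (2:ℝ) = Real.exp 1 * Real.exp 1 := by
    rw [← Real.exp_add]; norm_num
  have h3 : Real.exp 1 < 2.7182818286 := Real.exp_one_lt_d9
  have h4 : (0:ℝ) < Real.exp 1 := Real.exp_pos 1
  rw [h1]; nlinarith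



lemma grProb_add_le {n : ℕ} {p : ℝ} (h0 : 0 ≤ p) (h1 : p ≤ 1)
    {A B : SimpleGraph (Fin n) → Prop} :
    grProb n p (fun G => A G ∨ B G) ≤ grProb n p A + grProb n p B := by
  have hw : ∀ G : SimpleGraph (Fin n), 0 ≤ p ^ edgeCount G * (1 - p) ^ (n.choose 2 - edgeCount G) :=
    fun G => mul_nonneg (pow_nonneg h0 _) (pow_nonneg (by linarith) _)
  rw [grProb, grProb, grProb, ← Finset.sum_add_distrib]
  refine Finset.sum_le_sum fun G _ => ?_
  by_cases hA : A G <;> by_cases hB : B G <;> simp [hA, hB, hw G]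

/-- The per-pair bound. -/
lemma pair_bound {n : ℕ} {p : ℝ} (h0 : 0 ≤ p) (h1 : p ≤ 1) (d : ℕ) (u v : Fin n) :
    grProb n p (fun G => u ≠ v ∧ G.degree u ≤ d ∧ G.degree v ≤ d ∧
        (G.Adj u v ∨ ∃ w ∈ (Finset.univ : Finset (Fin n)), G.Adj u w ∧ G.Adj v w)) ≤
      p * (tail (n - 2) p d * tail (n - 2) p d) +
        (n : ℝ) * (p * (p * (tail (n - 3) p d * tail (n - 3) p d))) := by
  have ht2 := tail_nonneg (n-2) h0 h1 d
  have ht3 := tail_nonneg (n-3) h0 h1 d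
  have hB3 : (0:ℝ) ≤ p * (p * (tail (n - 3) p d * tail (n - 3) p d)) := by positivity
  have hB2 : (0:ℝ) ≤ p * (tail (n - 2) p d * tail (n - 2) p d) := by positivity
  by_cases huv : u = v
  · rw [grProb_false n p (fun G hG => hG.1 huv)]
    positivity
  · calc grProb n p (fun G => u ≠ v ∧ G.degree u ≤ d ∧ G.degree v ≤ d ∧
        (G.Adj u v ∨ ∃ w ∈ (Finset.univ : Finset (Fin n)), G.Adj u w ∧ G.Adj v w))
        ≤ grProb n p (fun G => (G.degree u ≤ d ∧ G.degree v ≤ d ∧ G.Adj u v) ∨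
            (∃ w ∈ (Finset.univ : Finset (Fin n)),
              G.degree u ≤ d ∧ G.degree v ≤ d ∧ G.Adj u w ∧ G.Adj v w)) := by
          refine grProb_mono h0 h1 fun G hG => ?_
          obtain ⟨_, hdu, hdv, hor⟩ := hG
          rcases hor with h | ⟨w, hw, h1', h2'⟩
          · exact Or.inl ⟨hdu, hdv, h⟩
          · exact Or.inr ⟨w, hw, hdu, hdv, h1', h2'⟩
      _ ≤ grProb n p (fun G => G.degree u ≤ d ∧ G.degree v ≤ d ∧ G.Adj u v) +
          grProb n p (fun G => ∃ w ∈ (Finset.univ : Finset (Fin n)),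
            G.degree u ≤ d ∧ G.degree v ≤ d ∧ G.Adj u w ∧ G.Adj v w) :=
          grProb_add_le h0 h1
      _ ≤ p * (tail (n - 2) p d * tail (n - 2) p d) +
          (n : ℝ) * (p * (p * (tail (n - 3) p d * tail (n - 3) p d))) := by
          refine add_le_add (est_adj p h0 h1 d huv) ?_
          refine le_trans (grProb_union_le h0 h1 Finset.univ _) ?_
          have hper : ∀ w ∈ (Finset.univ : Finset (Fin n)),
              grProb n p (fun G => G.degree u ≤ d ∧ G.degree v ≤ d ∧ G.Adj u w ∧ G.Adj v w)
              ≤ p * (p * (tail (n - 3) p d * tail (n - 3) p d)) := by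
            intro w _
            by_cases hwu : w = u
            · rw [grProb_false n p (fun G hG => G.irrefl (hwu ▸ hG.2.2.1))]
              exact hB3
            · by_cases hwv : w = v
              · rw [grProb_false n p (fun G hG => G.irrefl (hwv ▸ hG.2.2.2))]
                exact hB3
              · exact est_cn p h0 h1 d huv (Ne.symm hwu) (Ne.symm hwv)
          refine le_trans (Finset.sum_le_card_nsmul _ _ _ hper) ?_
          rw [Finset.card_univ, Fintype.card_fin, nsmul_eq_mul]


/-- Tail bound in exponential form, under the relevant hypotheses. -/
lemma tail_exp_bound {m d : ℕ} {pn L : ℝ} (hp0 : 0 ≤ pn) (hp1 : pn ≤ 1)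
    (hL : 1000 ≤ L)
    (hd_le : (d:ℝ) ≤ L / 6) (hd605 : L ≤ 6.05 * (d:ℝ))
    (hmp_low : L ≤ (m:ℝ) * pn) (hmp_high : (m:ℝ) * pn ≤ 1.1 * L)
    (hpd : pn * d ≤ 1) :
    tail m pn d ≤ L * Real.exp (-(0.515*L) + 1) := by
  have hd1 : 1 ≤ d := by
    have : (1:ℝ) ≤ (d:ℝ) := by linarith
    exact_mod_cast this
  have hd0 : (0:ℝ) < (d:ℝ) := by linarith
  have hmp : (d:ℝ) + 1 ≤ (m:ℝ) * pn := by linarith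
  have hmp0 : (0:ℝ) < (m:ℝ) * pn := by linarith
  have h1 := tail_le m d hp0 hp1 hmp
  have h2 := pow_div_factorial_le hd1 (by linarith : (d:ℝ) ≤ (m:ℝ)*pn)
  -- log bound
  have hratio_le : (m:ℝ) * pn / d ≤ 6.655 := by
    rw [div_le_iff₀ hd0]
    linarith
  have hratio_pos : (0:ℝ) < (m:ℝ) * pn / d := by positivity
  have hlog_le : Real.log ((m:ℝ) * pn / d) ≤ 1.91 :=
    (Real.log_le_iff_le_exp hratio_pos).2 (le_trans hratio_le numeric_6655)
  have hlog_nn : 0 ≤ 1 + Real.log ((m:ℝ) * pn / d) := by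
    have : (1:ℝ) ≤ (m:ℝ) * pn / d := by
      rw [le_div_iff₀ hd0]; linarith
    have := Real.log_nonneg this
    linarith
  -- exponent bound
  have hexp : (d:ℝ) * (1 + Real.log ((m:ℝ)*pn/d)) + (-((m:ℝ)*pn) + pn*d) ≤ -(0.515*L) + 1 := by
    have hmul : (d:ℝ) * (1 + Real.log ((m:ℝ)*pn/d)) ≤ (L/6) * 2.91 := by
      refine mul_le_mul hd_le (by linarith) hlog_nn (by linarith)
    linarith
  calc tail m pn d ≤ ((d:ℝ)+1) * (((m:ℝ)*pn) ^ d / (d.factorial : ℝ) *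
        Real.exp (-((m:ℝ)*pn) + pn*d)) := h1
    _ ≤ ((d:ℝ)+1) * (Real.exp ((d:ℝ) * (1 + Real.log ((m:ℝ)*pn/d))) *
        Real.exp (-((m:ℝ)*pn) + pn*d)) := by
        refine mul_le_mul_of_nonneg_left (mul_le_mul_of_nonneg_right h2 (by positivity))
          (by positivity)
    _ = ((d:ℝ)+1) * Real.exp ((d:ℝ) * (1 + Real.log ((m:ℝ)*pn/d)) + (-((m:ℝ)*pn) + pn*d)) := by
        rw [← Real.exp_add]
    _ ≤ L * Real.exp (-(0.515*L) + 1) := by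
        refine mul_le_mul (by linarith) (Real.exp_le_exp.2 hexp) (by positivity) (by linarith)


end NSP

open NSP in
theorem aas_small_vertices_apart (p : ℕ → ℝ) (hp0 : ∀ n, 0 ≤ p n) (hp1 : ∀ n, p n ≤ 1)
    (hlow : Filter.Tendsto (fun n : ℕ => (n : ℝ) * p n - Real.log n) Filter.atTop Filter.atTop)
    (hhigh : ∀ᶠ n : ℕ in Filter.atTop, p n ≤ 1.1 * Real.log n / n) :
    Filter.Tendsto
      (fun n : ℕ => grProb n (p n) fun G =>
        ∀ u v : Fin n, u ≠ v → (G.degree u : ℝ) ≤ Real.log n / 6 →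
          (G.degree v : ℝ) ≤ Real.log n / 6 →
          ¬ G.Adj u v ∧ ∀ w, ¬ (G.Adj u w ∧ G.Adj v w))
      Filter.atTop (nhds 1) := by
  have key : Filter.Tendsto
      (fun n : ℕ => grProb n (p n) fun G =>
        ¬ (∀ u v : Fin n, u ≠ v → (G.degree u : ℝ) ≤ Real.log n / 6 →
          (G.degree v : ℝ) ≤ Real.log n / 6 →
          ¬ G.Adj u v ∧ ∀ w, ¬ (G.Adj u w ∧ G.Adj v w)))
      Filter.atTop (nhds 0) := by
    -- majorant tendsto
    have hmajt : Filter.Tendsto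
        (fun n : ℕ => 25 * (Real.log n)^4 * Real.exp (-(0.03 * Real.log n)))
        Filter.atTop (nhds 0) := by
      have h1 : Filter.Tendsto (fun x : ℝ => 25 * x^4 * Real.exp (-(0.03 * x)))
          Filter.atTop (nhds 0) := by
        have h2 : Filter.Tendsto (fun y : ℝ => y ^ 4 * Real.exp (-y))
            Filter.atTop (nhds 0) := Real.tendsto_pow_mul_exp_neg_atTop_nhds_zero 4
        have h3 : Filter.Tendsto (fun x : ℝ => (0.03 : ℝ) * x) Filter.atTop Filter.atTop :=
          Filter.Tendsto.const_mul_atTop (by norm_num) Filter.tendsto_id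
        have h4 := (h2.comp h3).const_mul (25 / (0.03:ℝ)^4)
        rw [mul_zero] at h4
        refine h4.congr fun x => ?_
        simp only [Function.comp_apply]
        ring
      exact h1.comp (Real.tendsto_log_atTop.comp tendsto_natCast_atTop_atTop)
    -- lower bound
    have hlb : ∀ n : ℕ, 0 ≤ grProb n (p n) fun G =>
        ¬ (∀ u v : Fin n, u ≠ v → (G.degree u : ℝ) ≤ Real.log n / 6 →
          (G.degree v : ℝ) ≤ Real.log n / 6 →
          ¬ G.Adj u v ∧ ∀ w, ¬ (G.Adj u w ∧ G.Adj v w)) :=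
      fun n => grProb_nonneg (hp0 n) (hp1 n) _
    -- upper bound eventually
    have hub : ∀ᶠ n : ℕ in Filter.atTop, (grProb n (p n) fun G =>
        ¬ (∀ u v : Fin n, u ≠ v → (G.degree u : ℝ) ≤ Real.log n / 6 →
          (G.degree v : ℝ) ≤ Real.log n / 6 →
          ¬ G.Adj u v ∧ ∀ w, ¬ (G.Adj u w ∧ G.Adj v w)))
        ≤ 25 * (Real.log n)^4 * Real.exp (-(0.03 * Real.log n)) := by
      have ev2 : ∀ᶠ n : ℕ in Filter.atTop, 1 ≤ (n:ℝ) * p n - Real.log n :=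
        hlow.eventually_ge_atTop 1
      have ev3 : ∀ᶠ n : ℕ in Filter.atTop, 1000 ≤ Real.log n :=
        (Real.tendsto_log_atTop.comp tendsto_natCast_atTop_atTop).eventually_ge_atTop 1000
      have ev4 : ∀ᶠ n : ℕ in Filter.atTop, 4 ≤ n := Filter.eventually_ge_atTop 4
      have ev5 : ∀ᶠ n : ℕ in Filter.atTop, 1.1 * (Real.log n)^2 ≤ (n:ℝ) := by
        have h5 : Filter.Tendsto (fun x : ℝ => Real.log x ^ 2 / (1 * x + 0))
            Filter.atTop (nhds 0) := Real.tendsto_pow_log_div_mul_add_atTop 1 0 2 one_ne_zero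
        have h6 := (h5.comp tendsto_natCast_atTop_atTop).eventually_lt_const
          (by norm_num : (0:ℝ) < 1/1.1)
        filter_upwards [h6, Filter.eventually_gt_atTop 0] with n hn hn0
        simp only [Function.comp_apply, one_mul, add_zero] at hn
        have hn0' : (0:ℝ) < n := by exact_mod_cast hn0
        rw [div_lt_iff₀ hn0'] at hn
        nlinarith
      filter_upwards [hhigh, ev2, ev3, ev4, ev5] with n hhigh' hlow' hlog hn4 hquad
      set L := Real.log n with hLdef
      set pn := p n with hpndef
      set d := Nat.floor (L / 6) with hddef
      have hp0n : 0 ≤ pn := hp0 n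
      have hp1n : pn ≤ 1 := hp1 n
      have hnR : (4:ℝ) ≤ (n:ℝ) := by exact_mod_cast hn4
      have hn0 : (0:ℝ) < (n:ℝ) := by linarith
      have hL : 1000 ≤ L := hlog
      have hnp_high : (n:ℝ) * pn ≤ 1.1 * L := by
        have := mul_le_mul_of_nonneg_left hhigh' (le_of_lt hn0)
        rwa [mul_div_cancel₀ _ (ne_of_gt hn0)] at this
      have hnp_low : L + 1 ≤ (n:ℝ) * pn := by linarith
      have hd_le : (d:ℝ) ≤ L / 6 := Nat.floor_le (by positivity)
      have hd_ge : L/6 - 1 ≤ (d:ℝ) := by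
        have := Nat.lt_floor_add_one (L/6)
        linarith
      have hd605 : L ≤ 6.05 * (d:ℝ) := by linarith
      have hpd : pn * d ≤ 1 := by
        have h1 : pn * d ≤ (1.1 * L / n) * (L/6) :=
          mul_le_mul hhigh' hd_le (Nat.cast_nonneg d) (by positivity)
        have h2 : (1.1 * L / (n:ℝ)) * (L/6) ≤ 1 := by
          rw [show (1.1 * L / (n:ℝ)) * (L/6) = (1.1*L*L)/((n:ℝ)*6) from by ring,
            div_le_one (by positivity)]
          nlinarith
        linarith
      have h3p : 3 * pn ≤ 1 := by
        have h1 : 1.1 * L / (n:ℝ) ≤ 1 / L := by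
          rw [div_le_div_iff₀ hn0 (by linarith : (0:ℝ) < L)]
          nlinarith
        have : pn ≤ 1/L := le_trans hhigh' h1
        have hL' : 1/L ≤ 1/1000 := by
          rw [div_le_div_iff₀ (by linarith) (by norm_num)]
          linarith
        linarith
      -- cast subtraction
      have hm2 : ((n - 2 : ℕ) : ℝ) = (n:ℝ) - 2 := by
        have : (2:ℕ) ≤ n := by omega
        push_cast [Nat.cast_sub this]
        ring
      have hm3 : ((n - 3 : ℕ) : ℝ) = (n:ℝ) - 3 := by
        have : (3:ℕ) ≤ n := by omega
        push_cast [Nat.cast_sub this]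
        ring
      -- tail bounds
      have ht2 : tail (n-2) pn d ≤ L * Real.exp (-(0.515*L) + 1) := by
        refine tail_exp_bound hp0n hp1n hL hd_le hd605 ?_ ?_ hpd
        · rw [hm2]; nlinarith
        · rw [hm2]; nlinarith
      have ht3 : tail (n-3) pn d ≤ L * Real.exp (-(0.515*L) + 1) := by
        refine tail_exp_bound hp0n hp1n hL hd_le hd605 ?_ ?_ hpd
        · rw [hm3]; nlinarith
        · rw [hm3]; nlinarith
      set X := L * Real.exp (-(0.515*L) + 1) with hXdef
      have hX0 : 0 ≤ X := by positivity
      have ht2n : 0 ≤ tail (n-2) pn d := tail_nonneg _ hp0n hp1n _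
      have ht3n : 0 ≤ tail (n-3) pn d := tail_nonneg _ hp0n hp1n _
      -- union bound
      have hub1 : (grProb n pn fun G =>
          ¬ (∀ u v : Fin n, u ≠ v → (G.degree u : ℝ) ≤ L / 6 →
            (G.degree v : ℝ) ≤ L / 6 →
            ¬ G.Adj u v ∧ ∀ w, ¬ (G.Adj u w ∧ G.Adj v w)))
          ≤ grProb n pn fun G => ∃ u ∈ (Finset.univ : Finset (Fin n)),
              ∃ v ∈ (Finset.univ : Finset (Fin n)), (u ≠ v ∧ G.degree u ≤ d ∧ G.degree v ≤ d ∧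
            (G.Adj u v ∨ ∃ w ∈ (Finset.univ : Finset (Fin n)), G.Adj u w ∧ G.Adj v w)) := by
        refine grProb_mono hp0n hp1n fun G hG => ?_
        push_neg at hG
        obtain ⟨u, v, huv, hdu, hdv, hbad⟩ := hG
        refine ⟨u, Finset.mem_univ u, v, Finset.mem_univ v, huv, Nat.le_floor hdu,
          Nat.le_floor hdv, ?_⟩
        by_cases hA : G.Adj u v
        · exact Or.inl hA
        · obtain ⟨w, hw⟩ := hbad hA
          exact Or.inr ⟨w, Finset.mem_univ w, hw⟩
      set Bnd := pn * (tail (n - 2) pn d * tail (n - 2) pn d) +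
        (n : ℝ) * (pn * (pn * (tail (n - 3) pn d * tail (n - 3) pn d))) with hBnd
      have hub2 : (grProb n pn fun G => ∃ u ∈ (Finset.univ : Finset (Fin n)),
              ∃ v ∈ (Finset.univ : Finset (Fin n)), (u ≠ v ∧ G.degree u ≤ d ∧ G.degree v ≤ d ∧
            (G.Adj u v ∨ ∃ w ∈ (Finset.univ : Finset (Fin n)), G.Adj u w ∧ G.Adj v w)))
          ≤ (n:ℝ) * ((n:ℝ) * Bnd) := by
        refine le_trans (grProb_union_le hp0n hp1n Finset.univ _) ?_
        have hinner : ∀ u ∈ (Finset.univ : Finset (Fin n)),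
            (grProb n pn fun G => ∃ v ∈ (Finset.univ : Finset (Fin n)),
              (u ≠ v ∧ G.degree u ≤ d ∧ G.degree v ≤ d ∧
              (G.Adj u v ∨ ∃ w ∈ (Finset.univ : Finset (Fin n)), G.Adj u w ∧ G.Adj v w)))
            ≤ (n:ℝ) * Bnd := by
          intro u _
          refine le_trans (grProb_union_le hp0n hp1n Finset.univ _) ?_
          have hper : ∀ v ∈ (Finset.univ : Finset (Fin n)),
              (grProb n pn fun G => u ≠ v ∧ G.degree u ≤ d ∧ G.degree v ≤ d ∧
              (G.Adj u v ∨ ∃ w ∈ (Finset.univ : Finset (Fin n)), G.Adj u w ∧ G.Adj v w))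
              ≤ Bnd := fun v _ => pair_bound hp0n hp1n d u v
          refine le_trans (Finset.sum_le_card_nsmul _ _ _ hper) ?_
          rw [Finset.card_univ, Fintype.card_fin, nsmul_eq_mul]
        refine le_trans (Finset.sum_le_card_nsmul _ _ _ hinner) ?_
        rw [Finset.card_univ, Fintype.card_fin, nsmul_eq_mul]
      -- numeric final bound
      have hnum : (n:ℝ) * ((n:ℝ) * Bnd) ≤ 25 * L^4 * Real.exp (-(0.03 * L)) := by
        have hstep1 : Bnd ≤ pn * (X * X) + (n:ℝ) * (pn * (pn * (X * X))) := by
          rw [hBnd]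
          have h22 : tail (n-2) pn d * tail (n-2) pn d ≤ X * X :=
            mul_le_mul ht2 ht2 ht2n hX0
          have h33 : tail (n-3) pn d * tail (n-3) pn d ≤ X * X :=
            mul_le_mul ht3 ht3 ht3n hX0
          have := mul_le_mul_of_nonneg_left h22 hp0n
          have h2' := mul_le_mul_of_nonneg_left h33 (mul_nonneg hp0n hp0n)
          nlinarith [mul_nonneg hp0n hp0n, hn0.le]
        have hstep2 : (n:ℝ) * ((n:ℝ) * Bnd) ≤
            ((n:ℝ)*pn) * ((n:ℝ)*(X*X)) + ((n:ℝ)*pn) * (((n:ℝ)*pn) * ((n:ℝ)*(X*X))) := by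
          have h := mul_le_mul_of_nonneg_left (mul_le_mul_of_nonneg_left hstep1 hn0.le) hn0.le
          refine le_trans h (le_of_eq ?_)
          ring
        have hXX : (n:ℝ)*(X*X) = L^2 * Real.exp (-(0.03*L) + 2) := by
          have hnexp : (n:ℝ) = Real.exp L := (Real.exp_log hn0).symm
          rw [hXdef, hnexp]
          have h1 : Real.exp L * (L * Real.exp (-(0.515*L)+1) * (L * Real.exp (-(0.515*L)+1)))
              = L^2 * (Real.exp L * Real.exp (-(0.515*L)+1) * Real.exp (-(0.515*L)+1)) := by
            ring
          rw [h1, ← Real.exp_add, ← Real.exp_add]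
          congr 1
          ring
        have hnp0 : 0 ≤ (n:ℝ)*pn := mul_nonneg hn0.le hp0n
        have hXX0 : 0 ≤ (n:ℝ)*(X*X) := by positivity
        have hstep3 : ((n:ℝ)*pn) * ((n:ℝ)*(X*X)) + ((n:ℝ)*pn) * (((n:ℝ)*pn) * ((n:ℝ)*(X*X)))
            ≤ (1.1*L) * ((n:ℝ)*(X*X)) + (1.1*L) * ((1.1*L) * ((n:ℝ)*(X*X))) := by
          have h1 := mul_le_mul_of_nonneg_right hnp_high hXX0
          have h2 : ((n:ℝ)*pn) * (((n:ℝ)*pn) * ((n:ℝ)*(X*X))) ≤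
              (1.1*L) * ((1.1*L) * ((n:ℝ)*(X*X))) :=
            mul_le_mul hnp_high (mul_le_mul_of_nonneg_right hnp_high hXX0)
              (mul_nonneg hnp0 hXX0) (by positivity)
          linarith
        have hfin : (1.1*L) * ((n:ℝ)*(X*X)) + (1.1*L) * ((1.1*L) * ((n:ℝ)*(X*X)))
            ≤ 25 * L^4 * Real.exp (-(0.03 * L)) := by
          rw [hXX]
          have hE : Real.exp (-(0.03*L) + 2) = Real.exp (-(0.03*L)) * Real.exp 2 :=
            Real.exp_add _ _
          rw [hE]
          have hkey : (1.1*L^3 + 1.21*L^4) * Real.exp 2 ≤ 25 * L^4 := by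
            have hL0 : (0:ℝ) ≤ L := by linarith
            have hc : (1.1*L^3 + 1.21*L^4) * Real.exp 2 ≤ (1.1*L^3 + 1.21*L^4) * 7.4 := by
              refine mul_le_mul_of_nonneg_left exp_two_le (by positivity)
            have hlsq : 1000 * L^3 ≤ L^4 := by nlinarith [pow_nonneg hL0 3]
            nlinarith
          have hexp0 : (0:ℝ) ≤ Real.exp (-(0.03*L)) := (Real.exp_pos _).le
          nlinarith [hkey, hexp0, mul_le_mul_of_nonneg_right hkey hexp0]
        exact le_trans (le_trans hstep2 hstep3) hfin
      calc (grProb n pn fun G =>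
          ¬ (∀ u v : Fin n, u ≠ v → (G.degree u : ℝ) ≤ L / 6 →
            (G.degree v : ℝ) ≤ L / 6 →
            ¬ G.Adj u v ∧ ∀ w, ¬ (G.Adj u w ∧ G.Adj v w)))
          ≤ (n:ℝ) * ((n:ℝ) * Bnd) := le_trans hub1 hub2
        _ ≤ 25 * L^4 * Real.exp (-(0.03 * L)) := hnum
    exact tendsto_of_tendsto_of_tendsto_of_le_of_le' tendsto_const_nhds hmajt
      (Filter.Eventually.of_forall hlb) hub
  have hfun : (fun n : ℕ => grProb n (p n) fun G =>
        ∀ u v : Fin n, u ≠ v → (G.degree u : ℝ) ≤ Real.log n / 6 →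
          (G.degree v : ℝ) ≤ Real.log n / 6 →
          ¬ G.Adj u v ∧ ∀ w, ¬ (G.Adj u w ∧ G.Adj v w))
      = fun n : ℕ => 1 - grProb n (p n) fun G =>
        ¬ (∀ u v : Fin n, u ≠ v → (G.degree u : ℝ) ≤ Real.log n / 6 →
          (G.degree v : ℝ) ≤ Real.log n / 6 →
          ¬ G.Adj u v ∧ ∀ w, ¬ (G.Adj u w ∧ G.Adj v w)) :=
    funext fun n => grProb_compl n _
  rw [hfun]
  have := (tendsto_const_nhds (x := (1:ℝ)) (f := Filter.atTop)).sub key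
  simpa using this
end
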